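/- arXiv:1801.07817 — 2 statements merged into one kernel-verified Lean document; each statement's English description precedes it below -/
import Mathlib

section
/- Let W ⊆ ℝ^m × ℝ^d be open and g : W → ℝ continuous such that for each i ∈ {1, …, d} the partial derivative ∂g/∂x_i exists and is continuous on W, with mollifications g_{n₁,n₂} as defined in the context. Then for every (λ, x) ∈ W and every i ∈ {1, …, d} there exists N ∈ ℕ such that for each n₂ ≥ N the inner limit lim_{n₁→∞} ∂g_{n₁,n₂}/∂x_i(λ, x) exists, and lim_{n₂→∞} lim_{n₁→∞} ∂g_{n₁,n₂}/∂x_i(λ, x) = ∂g/∂x_i(λ, x). (Lemma A.1(iv) of the paper.) -/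
open MeasureTheory Filter Topology

/-- The mollifier `η_n^{(l)}` on `ℝ^l`: `η_n(z) = β_l n^l exp(1/(n²‖z‖² − 1))` for
`‖z‖ < 1/n` and `0` otherwise, with `β_l = (∫_{‖y‖<1} exp(1/(‖y‖² − 1)) dy)⁻¹`. -/
noncomputable def mollifier (l n : ℕ) (z : EuclideanSpace ℝ (Fin l)) : ℝ :=
  if ‖z‖ < 1 / n then
    (∫ y : EuclideanSpace ℝ (Fin l),
        if ‖y‖ < 1 then Real.exp (1 / (‖y‖ ^ 2 - 1)) else 0)⁻¹
      * (n : ℝ) ^ l * Real.exp (1 / ((n : ℝ) ^ 2 * ‖z‖ ^ 2 - 1))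
  else 0

namespace MollAux

noncomputable def bump (l : ℕ) (y : EuclideanSpace ℝ (Fin l)) : ℝ :=
  if ‖y‖ < 1 then Real.exp (1 / (‖y‖ ^ 2 - 1)) else 0

lemma bump_nonneg (l : ℕ) (y : EuclideanSpace ℝ (Fin l)) : 0 ≤ bump l y := by
  unfold bump; split
  · positivity
  · exact le_rfl

lemma bump_le_one (l : ℕ) (y : EuclideanSpace ℝ (Fin l)) : bump l y ≤ 1 := by
  unfold bump; split
  · rename_i h
    have h2 : ‖y‖ ^ 2 - 1 < 0 := by nlinarith [norm_nonneg y]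
    exact Real.exp_le_one_iff.2 (div_nonpos_of_nonneg_of_nonpos zero_le_one h2.le)
  · exact zero_le_one

lemma bump_measurable (l : ℕ) : Measurable (bump l) := by
  unfold bump
  apply Measurable.ite (measurableSet_lt measurable_norm measurable_const)
  · exact (Measurable.div measurable_const
      ((measurable_norm.pow_const 2).sub measurable_const)).exp
  · exact measurable_const

/-- general integrability: bounded, measurable, support in a ball -/
lemma integrable_of_bound_support {l : ℕ} {f : EuclideanSpace ℝ (Fin l) → ℝ}
    (hm : Measurable f) (C r : ℝ) (hb : ∀ z, ‖f z‖ ≤ C)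
    (hs : ∀ z, r ≤ ‖z‖ → f z = 0) : Integrable f := by
  have hf : f = (Metric.ball (0 : EuclideanSpace ℝ (Fin l)) r).indicator f := by
    ext z
    by_cases h : ‖z‖ < r
    · rw [Set.indicator_of_mem (mem_ball_zero_iff.2 h)]
    · rw [Set.indicator_of_notMem (fun hz => h (mem_ball_zero_iff.1 hz)),
        hs z (not_lt.1 h)]
  rw [hf, integrable_indicator_iff measurableSet_ball]
  exact Measure.integrableOn_of_bounded measure_ball_lt_top.ne
    hm.aestronglyMeasurable (ae_of_all _ hb)

lemma bump_integrable (l : ℕ) : Integrable (bump l) := by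
  refine integrable_of_bound_support (bump_measurable l) 1 1 (fun z => ?_)
    (fun z hz => if_neg (not_lt.2 hz))
  rw [Real.norm_eq_abs, abs_of_nonneg (bump_nonneg l z)]
  exact bump_le_one l z

lemma B_pos (l : ℕ) : 0 < ∫ y, bump l y := by
  have hlow : ∀ y : EuclideanSpace ℝ (Fin l),
      (Metric.closedBall (0 : EuclideanSpace ℝ (Fin l)) (1/2)).indicator
        (fun _ => Real.exp (-2)) y ≤ bump l y := by
    intro y
    by_cases h : y ∈ Metric.closedBall (0 : EuclideanSpace ℝ (Fin l)) (1/2)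
    · rw [Set.indicator_of_mem h]
      have hy : ‖y‖ ≤ 1/2 := mem_closedBall_zero_iff.1 h
      have h1 : ‖y‖ < 1 := lt_of_le_of_lt hy (by norm_num)
      rw [bump, if_pos h1]
      apply Real.exp_le_exp.2
      have hd : ‖y‖ ^ 2 - 1 < 0 := by nlinarith [norm_nonneg y]
      rw [le_div_iff_of_neg hd]
      nlinarith [norm_nonneg y]
    · rw [Set.indicator_of_notMem h]; exact bump_nonneg l y
  have hint : Integrable ((Metric.closedBall (0 : EuclideanSpace ℝ (Fin l)) (1/2)).indicator
      (fun _ => Real.exp (-2))) :=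
    (integrable_indicator_iff measurableSet_closedBall).2
      (integrableOn_const measure_closedBall_lt_top.ne)
  have h2 : ∫ y, (Metric.closedBall (0 : EuclideanSpace ℝ (Fin l)) (1/2)).indicator
      (fun _ => Real.exp (-2)) y ≤ ∫ y, bump l y :=
    integral_mono hint (bump_integrable l) hlow
  refine lt_of_lt_of_le ?_ h2
  rw [integral_indicator_const _ measurableSet_closedBall, smul_eq_mul]
  have hpos : 0 < (volume (Metric.closedBall (0 : EuclideanSpace ℝ (Fin l)) (1/2))).toReal := by
    apply ENNReal.toReal_pos
    · exact ((Metric.measure_ball_pos volume (0:EuclideanSpace ℝ (Fin l)) (by norm_num : (0:ℝ) < 1/2)).trans_le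
        (measure_mono Metric.ball_subset_closedBall)).ne'
    · exact measure_closedBall_lt_top.ne
  positivity

end MollAux

namespace MollAux

lemma Bdef (l : ℕ) : (∫ y : EuclideanSpace ℝ (Fin l),
    if ‖y‖ < 1 then Real.exp (1 / (‖y‖ ^ 2 - 1)) else 0) = ∫ y, bump l y := rfl

lemma B_nonneg (l : ℕ) : 0 ≤ ∫ y, bump l y :=
  integral_nonneg fun y => bump_nonneg l y

lemma mollifier_eq_bump {l n : ℕ} (hn : 1 ≤ n) (z : EuclideanSpace ℝ (Fin l)) :
    mollifier l n z = (∫ y, bump l y)⁻¹ * (n:ℝ)^l * bump l ((n:ℝ) • z) := by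
  have hn' : (0:ℝ) < n := by exact_mod_cast hn
  have hns : ‖(n:ℝ) • z‖ = (n:ℝ) * ‖z‖ := by
    rw [norm_smul, Real.norm_eq_abs, abs_of_pos hn']
  have hcond : ‖z‖ < 1/(n:ℝ) ↔ ‖(n:ℝ) • z‖ < 1 := by
    rw [hns, lt_div_iff₀ hn', mul_comm]
  by_cases h : ‖z‖ < 1/(n:ℝ)
  · rw [mollifier, if_pos h, bump, if_pos (hcond.1 h), Bdef]
    congr 2
    rw [hns]; ring
  · rw [mollifier, if_neg h, bump, if_neg (fun hc => h (hcond.2 hc)), mul_zero]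

lemma mollifier_integral (l : ℕ) {n : ℕ} (hn : 1 ≤ n) :
    ∫ z, mollifier l n z = 1 := by
  have hb := B_pos l
  have hn' : (0:ℝ) < n := by exact_mod_cast hn
  have h1 : ∫ z, mollifier l n z
      = (∫ y, bump l y)⁻¹ * ((n:ℝ)^l * ∫ z, bump l ((n:ℝ) • z)) := by
    simp_rw [mollifier_eq_bump hn, mul_assoc]
    rw [integral_const_mul, integral_const_mul]
  rw [h1, Measure.integral_comp_smul volume (bump l) (n:ℝ), finrank_euclideanSpace_fin,
    smul_eq_mul, abs_of_nonneg (by positivity : (0:ℝ) ≤ (((n:ℝ)^l)⁻¹))]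
  have h2 : (∫ y, bump l y) ≠ 0 := hb.ne'
  have h3 : ((n:ℝ)^l) ≠ 0 := by positivity
  field_simp

lemma mollifier_nonneg (l n : ℕ) (z : EuclideanSpace ℝ (Fin l)) :
    0 ≤ mollifier l n z := by
  rw [mollifier]; split
  · rw [Bdef]
    exact mul_nonneg (mul_nonneg (inv_nonneg.2 (B_nonneg l)) (by positivity))
      (Real.exp_pos _).le
  · exact le_rfl

lemma mollifier_eq_zero {l n : ℕ} {z : EuclideanSpace ℝ (Fin l)}
    (h : 1/(n:ℝ) ≤ ‖z‖) : mollifier l n z = 0 := if_neg (not_lt.2 h)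

lemma mollifier_lt {l n : ℕ} {z : EuclideanSpace ℝ (Fin l)}
    (h : mollifier l n z ≠ 0) : ‖z‖ < 1/(n:ℝ) := by
  by_contra hc; exact h (mollifier_eq_zero (not_lt.1 hc))

lemma mollifier_measurable (l n : ℕ) : Measurable (mollifier l n) := by
  unfold mollifier
  apply Measurable.ite (measurableSet_lt measurable_norm measurable_const)
  · exact ((Measurable.div measurable_const
      (((measurable_norm.pow_const 2).const_mul _).sub measurable_const)).exp).const_mul _
  · exact measurable_const

lemma mollifier_le (l n : ℕ) (z : EuclideanSpace ℝ (Fin l)) :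
    mollifier l n z ≤ (∫ y, bump l y)⁻¹ * (n:ℝ)^l := by
  have h1 : 0 ≤ (∫ y, bump l y)⁻¹ * (n:ℝ)^l :=
    mul_nonneg (inv_nonneg.2 (B_nonneg l)) (by positivity)
  rw [mollifier]; split
  · rename_i h
    rw [Bdef]
    have h2 : Real.exp (1/((n:ℝ)^2*‖z‖^2-1)) ≤ 1 := by
      apply Real.exp_le_one_iff.2
      apply div_nonpos_of_nonneg_of_nonpos zero_le_one
      rcases Nat.eq_zero_or_pos n with h0 | h0
      · subst h0; simp
      · have hn' : (0:ℝ) < n := by exact_mod_cast h0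
        have h5 := (lt_div_iff₀ hn').1 h
        have key : (n:ℝ)^2*‖z‖^2 = (‖z‖*(n:ℝ))^2 := by ring
        nlinarith [mul_nonneg (norm_nonneg z) hn'.le]
    exact mul_le_of_le_one_right h1 h2
  · exact h1

lemma mollifier_integrable (l n : ℕ) : Integrable (mollifier l n) :=
  integrable_of_bound_support (mollifier_measurable l n) _ (1/(n:ℝ))
    (fun z => by
      rw [Real.norm_eq_abs, abs_of_nonneg (mollifier_nonneg l n z)]
      exact mollifier_le l n z)
    (fun _ hz => mollifier_eq_zero hz)

end MollAux

namespace MollAux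

lemma mollifier_support_tendsto (l : ℕ) :
    Tendsto (fun n => Function.support (mollifier l n)) atTop
      (𝓝 (0 : EuclideanSpace ℝ (Fin l))).smallSets := by
  rw [tendsto_smallSets_iff]
  intro s hs
  obtain ⟨r, hr, hball⟩ := Metric.mem_nhds_iff.1 hs
  filter_upwards [tendsto_one_div_atTop_nhds_zero_nat.eventually_lt_const hr] with n hn
  intro z hz
  exact hball (mem_ball_zero_iff.2 ((mollifier_lt hz).trans hn))

lemma mollifier_conv_tendsto {l : ℕ} {f : EuclideanSpace ℝ (Fin l) → ℝ}
    (hfm : AEStronglyMeasurable f (volume : Measure (EuclideanSpace ℝ (Fin l))))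
    {x₀ : EuclideanSpace ℝ (Fin l)} (hf : ContinuousAt f x₀) :
    Tendsto (fun n : ℕ => ∫ u, mollifier l n u * f (x₀ - u)) atTop (𝓝 (f x₀)) := by
  have key := convolution_tendsto_right
    (μ := (volume : Measure (EuclideanSpace ℝ (Fin l))))
    (l := atTop) (φ := fun n => mollifier l n) (g := fun _ : ℕ => f) (k := fun _ => x₀)
    (x₀ := x₀) (z₀ := f x₀)
    (Eventually.of_forall fun n => mollifier_nonneg l n)
    (eventually_atTop.2 ⟨1, fun _ hn => mollifier_integral l hn⟩)
    (mollifier_support_tendsto l)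
    (Eventually.of_forall fun _ => hfm)
    (by exact Filter.Tendsto.comp hf tendsto_snd)
    tendsto_const_nhds
  simpa only [convolution_def, ContinuousLinearMap.lsmul_apply, smul_eq_mul] using key

lemma measurable_indicator_of_continuousOn {α : Type*} [TopologicalSpace α] [MeasurableSpace α]
    [OpensMeasurableSpace α] {W : Set α} (hW : IsOpen W) {g : α → ℝ}
    (hg : ContinuousOn g W) : Measurable (W.indicator g) := by
  apply measurable_of_isOpen
  intro t ht
  obtain ⟨u, u_open, hu⟩ := _root_.continuousOn_iff'.1 hg t ht
  rw [Set.indicator_preimage]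
  simp only [Set.ite]
  rw [hu]
  exact (u_open.measurableSet.inter hW.measurableSet).union
    ((measurable_const ht.measurableSet).diff hW.measurableSet)

end MollAux

/-- The mollification `g_{n₁,n₂}(λ, x) = ∫ η_{n₂}(y) ∫ η_{n₁}(u) ḡ(λ−u, x−y) du dy`,
where `ḡ` is the extension of `g` by `0` off `W` (the Bochner integral is `0` whenever
the integrand is not integrable). -/
noncomputable def mollification {m d : ℕ}
    (W : Set (EuclideanSpace ℝ (Fin m) × EuclideanSpace ℝ (Fin d)))
    (g : EuclideanSpace ℝ (Fin m) × EuclideanSpace ℝ (Fin d) → ℝ)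
    (n₁ n₂ : ℕ) (p : EuclideanSpace ℝ (Fin m) × EuclideanSpace ℝ (Fin d)) : ℝ :=
  ∫ y : EuclideanSpace ℝ (Fin d), mollifier d n₂ y *
    ∫ u : EuclideanSpace ℝ (Fin m), mollifier m n₁ u *
      Set.indicator W g (p.1 - u, p.2 - y)

set_option maxHeartbeats 1000000 in
open MollAux in
/-- **Lemma A.1(iv)**: if `g` has continuous partial derivatives `gx i = ∂g/∂x_i` on
`W`, then for every `(λ, x) ∈ W` and every `i` there is `N` such that for each
`n₂ ≥ N` the inner limit `L n₂ = lim_{n₁→∞} ∂g_{n₁,n₂}/∂x_i(λ, x)` exists, and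
`lim_{n₂→∞} L n₂ = ∂g/∂x_i(λ, x)`. -/
theorem stmt3 {m d : ℕ}
    (W : Set (EuclideanSpace ℝ (Fin m) × EuclideanSpace ℝ (Fin d)))
    (hW : IsOpen W)
    (g : EuclideanSpace ℝ (Fin m) × EuclideanSpace ℝ (Fin d) → ℝ)
    (hg : ContinuousOn g W)
    (gx : Fin d → (EuclideanSpace ℝ (Fin m) × EuclideanSpace ℝ (Fin d)) → ℝ)
    (hgx : ∀ i : Fin d, ∀ p ∈ W,
      HasDerivAt (fun t : ℝ => g (p.1, p.2 + t • EuclideanSpace.single i 1))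
        (gx i p) 0)
    (hgxc : ∀ i : Fin d, ContinuousOn (gx i) W)
    (p : EuclideanSpace ℝ (Fin m) × EuclideanSpace ℝ (Fin d)) (hp : p ∈ W)
    (i : Fin d) :
    ∃ N : ℕ, ∃ L : ℕ → ℝ,
      (∀ n₂ ≥ N,
        Tendsto
          (fun n₁ =>
            deriv
              (fun t : ℝ =>
                mollification W g n₁ n₂ (p.1, p.2 + t • EuclideanSpace.single i 1))
              0)
          atTop (𝓝 (L n₂))) ∧
      Tendsto L atTop (𝓝 (gx i p)) := by
  classical
  obtain ⟨δ, δpos, hδ⟩ := Metric.isOpen_iff.1 hW p hp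
  set ε : ℝ := δ/4 with hε
  have εpos : 0 < ε := by positivity
  set e : EuclideanSpace ℝ (Fin d) := EuclideanSpace.single i 1 with he
  have hnorme : ‖e‖ = 1 := by rw [he, EuclideanSpace.norm_single]; norm_num
  set K : Set (EuclideanSpace ℝ (Fin m) × EuclideanSpace ℝ (Fin d)) :=
    Metric.closedBall p.1 (2*ε) ×ˢ Metric.closedBall p.2 (2*ε) with hK
  have hKW : K ⊆ W := by
    rintro ⟨a, b⟩ ⟨ha, hb⟩
    apply hδ
    rw [Metric.mem_ball, Prod.dist_eq]
    have h1 : dist a p.1 ≤ 2*ε := Metric.mem_closedBall.1 ha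
    have h2 : dist b p.2 ≤ 2*ε := Metric.mem_closedBall.1 hb
    apply max_lt <;> · simp only []; linarith
  have hKc : IsCompact K := (isCompact_closedBall _ _).prod (isCompact_closedBall _ _)
  obtain ⟨C, hC⟩ := hKc.exists_bound_of_continuousOn ((hgxc i).mono hKW)
  obtain ⟨Cg, hCg⟩ := hKc.exists_bound_of_continuousOn (hg.mono hKW)
  obtain ⟨N₀, hN₀⟩ := exists_nat_one_div_lt εpos
  set N : ℕ := N₀ + 1 with hN
  have hNpos : 1 ≤ N := Nat.le_add_left 1 N₀
  have hNe : ∀ n, N ≤ n → 1/(n:ℝ) < ε := by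
    intro n hn
    have h1 : (0:ℝ) < N := by exact_mod_cast hNpos
    have h2 : (N:ℝ) ≤ (n:ℝ) := by exact_mod_cast hn
    have h3 : 1/(n:ℝ) ≤ 1/(N:ℝ) := one_div_le_one_div_of_le h1 h2
    have h4 : (1:ℝ)/(N:ℝ) < ε := by
      rw [hN]; push_cast; exact hN₀
    linarith
  set G0 := W.indicator g with hG0
  set G1 := W.indicator (gx i) with hG1
  have hG0m : Measurable G0 := measurable_indicator_of_continuousOn hW hg
  have hG1m : Measurable G1 := measurable_indicator_of_continuousOn hW (hgxc i)
  have hCK : ∀ q ∈ K, ‖G1 q‖ ≤ C := by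
    intro q hq
    rw [hG1, Set.indicator_of_mem (hKW hq)]
    exact hC q hq
  have hCgK : ∀ q ∈ K, ‖G0 q‖ ≤ Cg := by
    intro q hq
    rw [hG0, Set.indicator_of_mem (hKW hq)]
    exact hCg q hq
  have hmemK : ∀ (u : EuclideanSpace ℝ (Fin m)) (y : EuclideanSpace ℝ (Fin d)) (t : ℝ),
      ‖u‖ ≤ ε → ‖y‖ ≤ ε → |t| ≤ ε → (p.1 - u, p.2 + t • e - y) ∈ K := by
    intro u y t hu hy ht
    refine Set.mem_prod.2 ⟨?_, ?_⟩
    · rw [Metric.mem_closedBall, dist_eq_norm]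
      have h1 : p.1 - u - p.1 = -u := by abel
      rw [h1, norm_neg]; linarith
    · rw [Metric.mem_closedBall, dist_eq_norm]
      have h1 : p.2 + t • e - y - p.2 = t • e - y := by abel
      rw [h1]
      calc ‖t • e - y‖ ≤ ‖t • e‖ + ‖y‖ := norm_sub_le _ _
        _ = |t| * ‖e‖ + ‖y‖ := by rw [norm_smul, Real.norm_eq_abs]
        _ ≤ 2*ε := by rw [hnorme]; linarith
  -- main integrability/bound helper on the product space
  have main : ∀ (h : EuclideanSpace ℝ (Fin m) × EuclideanSpace ℝ (Fin d) → ℝ),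
      Measurable h → ∀ C' : ℝ, (∀ q ∈ K, ‖h q‖ ≤ C') →
      ∀ (n₁ n₂ : ℕ), N ≤ n₁ → N ≤ n₂ → ∀ t : ℝ, |t| ≤ ε →
      (∀ z : EuclideanSpace ℝ (Fin d) × EuclideanSpace ℝ (Fin m),
        ‖mollifier d n₂ z.1 * mollifier m n₁ z.2 * h (p.1 - z.2, p.2 + t • e - z.1)‖
          ≤ mollifier d n₂ z.1 * mollifier m n₁ z.2 * C') ∧
      Integrable (fun z : EuclideanSpace ℝ (Fin d) × EuclideanSpace ℝ (Fin m) =>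
          mollifier d n₂ z.1 * mollifier m n₁ z.2 * h (p.1 - z.2, p.2 + t • e - z.1))
        (volume.prod volume) := by
    intro h hhm C' hC' n₁ n₂ hn₁ hn₂ t ht
    have hb : ∀ z : EuclideanSpace ℝ (Fin d) × EuclideanSpace ℝ (Fin m),
        ‖mollifier d n₂ z.1 * mollifier m n₁ z.2 * h (p.1 - z.2, p.2 + t • e - z.1)‖
          ≤ mollifier d n₂ z.1 * mollifier m n₁ z.2 * C' := by
      intro z
      by_cases hz1 : mollifier d n₂ z.1 = 0
      · simp [hz1]
      by_cases hz2 : mollifier m n₁ z.2 = 0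
      · simp [hz2]
      have h1 : ‖z.1‖ ≤ ε := ((mollifier_lt hz1).trans (hNe n₂ hn₂)).le
      have h2 : ‖z.2‖ ≤ ε := ((mollifier_lt hz2).trans (hNe n₁ hn₁)).le
      have hq := hmemK z.2 z.1 t h2 h1 ht
      rw [norm_mul, norm_mul, Real.norm_of_nonneg (mollifier_nonneg _ _ _),
        Real.norm_of_nonneg (mollifier_nonneg _ _ _)]
      exact mul_le_mul_of_nonneg_left (hC' _ hq)
        (mul_nonneg (mollifier_nonneg _ _ _) (mollifier_nonneg _ _ _))
    refine ⟨hb, ?_⟩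
    have hbint : Integrable (fun z : EuclideanSpace ℝ (Fin d) × EuclideanSpace ℝ (Fin m) =>
        mollifier d n₂ z.1 * mollifier m n₁ z.2 * C') (volume.prod volume) :=
      ((mollifier_integrable d n₂).mul_prod (mollifier_integrable m n₁)).mul_const C'
    have hmeas : Measurable (fun z : EuclideanSpace ℝ (Fin d) × EuclideanSpace ℝ (Fin m) =>
        mollifier d n₂ z.1 * mollifier m n₁ z.2 * h (p.1 - z.2, p.2 + t • e - z.1)) := by
      apply Measurable.mul
      · exact ((mollifier_measurable d n₂).comp measurable_fst).mul
          ((mollifier_measurable m n₁).comp measurable_snd)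
      · exact hhm.comp (((continuous_const.sub continuous_snd).prodMk
          (continuous_const.sub continuous_fst)).measurable)
    exact hbint.mono' hmeas.aestronglyMeasurable (ae_of_all _ hb)
  -- iterated integral equals product integral
  have hIter : ∀ (h : EuclideanSpace ℝ (Fin m) × EuclideanSpace ℝ (Fin d) → ℝ),
      Measurable h → ∀ C' : ℝ, (∀ q ∈ K, ‖h q‖ ≤ C') →
      ∀ (n₁ n₂ : ℕ), N ≤ n₁ → N ≤ n₂ → ∀ t : ℝ, |t| ≤ ε →
      (∫ y, mollifier d n₂ y * ∫ u, mollifier m n₁ u * h (p.1 - u, p.2 + t • e - y))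
      = ∫ z : EuclideanSpace ℝ (Fin d) × EuclideanSpace ℝ (Fin m),
          mollifier d n₂ z.1 * mollifier m n₁ z.2 * h (p.1 - z.2, p.2 + t • e - z.1)
          ∂(volume.prod volume) := by
    intro h hhm C' hC' n₁ n₂ hn₁ hn₂ t ht
    have hint := (main h hhm C' hC' n₁ n₂ hn₁ hn₂ t ht).2
    have hint' : Integrable (Function.uncurry fun (y : EuclideanSpace ℝ (Fin d))
        (u : EuclideanSpace ℝ (Fin m)) => mollifier d n₂ y *
          (mollifier m n₁ u * h (p.1 - u, p.2 + t • e - y))) (volume.prod volume) :=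
      hint.congr (ae_of_all _ fun z => by simp only [Function.uncurry]; ring)
    have h2 := integral_integral hint'
    simp_rw [integral_const_mul] at h2
    rw [h2]
    simp_rw [mul_assoc]
  have habs0 : |(0:ℝ)| ≤ ε := by simp [εpos.le]
  -- Step A : the derivative at 0 equals the mollification of the partial derivative
  have stepA : ∀ n₁ n₂ : ℕ, N ≤ n₁ → N ≤ n₂ →
      deriv (fun t : ℝ => mollification W g n₁ n₂ (p.1, p.2 + t • e)) 0
      = ∫ y, mollifier d n₂ y * ∫ u, mollifier m n₁ u * G1 (p.1 - u, p.2 - y) := by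
    intro n₁ n₂ hn₁ hn₂
    have hmolle : ∀ t : ℝ, |t| ≤ ε → mollification W g n₁ n₂ (p.1, p.2 + t • e)
        = ∫ z : EuclideanSpace ℝ (Fin d) × EuclideanSpace ℝ (Fin m),
            mollifier d n₂ z.1 * mollifier m n₁ z.2 * G0 (p.1 - z.2, p.2 + t • e - z.1)
            ∂(volume.prod volume) := by
      intro t ht
      have h1 : mollification W g n₁ n₂ (p.1, p.2 + t • e)
          = ∫ y, mollifier d n₂ y * ∫ u, mollifier m n₁ u *
              G0 (p.1 - u, p.2 + t • e - y) := rfl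
      rw [h1, hIter G0 hG0m Cg hCgK n₁ n₂ hn₁ hn₂ t ht]
    have hder : HasDerivAt
        (fun t : ℝ => ∫ z : EuclideanSpace ℝ (Fin d) × EuclideanSpace ℝ (Fin m),
            mollifier d n₂ z.1 * mollifier m n₁ z.2 * G0 (p.1 - z.2, p.2 + t • e - z.1)
            ∂(volume.prod volume))
        (∫ z : EuclideanSpace ℝ (Fin d) × EuclideanSpace ℝ (Fin m),
            mollifier d n₂ z.1 * mollifier m n₁ z.2 * G1 (p.1 - z.2, p.2 + (0:ℝ) • e - z.1)
            ∂(volume.prod volume)) 0 := by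
      refine (hasDerivAt_integral_of_dominated_loc_of_deriv_le (s := Metric.ball (0:ℝ) ε) (Metric.ball_mem_nhds (0:ℝ) εpos)
        (bound := fun z => mollifier d n₂ z.1 * mollifier m n₁ z.2 * C)
        (F' := fun t (z : EuclideanSpace ℝ (Fin d) × EuclideanSpace ℝ (Fin m)) =>
          mollifier d n₂ z.1 * mollifier m n₁ z.2 * G1 (p.1 - z.2, p.2 + t • e - z.1))
        ?_ ?_ ?_ ?_ ?_ ?_).2
      · filter_upwards [Metric.ball_mem_nhds (0:ℝ) εpos] with t ht
        have ht' : |t| ≤ ε := by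
          have := mem_ball_zero_iff.1 ht
          rw [Real.norm_eq_abs] at this; exact this.le
        exact ((main G0 hG0m Cg hCgK n₁ n₂ hn₁ hn₂ t ht').2).aestronglyMeasurable
      · exact (main G0 hG0m Cg hCgK n₁ n₂ hn₁ hn₂ 0 habs0).2
      · exact ((main G1 hG1m C hCK n₁ n₂ hn₁ hn₂ 0 habs0).2).aestronglyMeasurable
      · apply ae_of_all
        intro z t ht
        have ht' : |t| ≤ ε := by
          have := mem_ball_zero_iff.1 ht
          rw [Real.norm_eq_abs] at this; exact this.le
        exact (main G1 hG1m C hCK n₁ n₂ hn₁ hn₂ t ht').1 z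
      · exact ((mollifier_integrable d n₂).mul_prod (mollifier_integrable m n₁)).mul_const C
      · apply ae_of_all
        intro z t ht''
        have ht : |t| ≤ ε := by
          have := mem_ball_zero_iff.1 ht''
          rw [Real.norm_eq_abs] at this; exact this.le
        by_cases hz1 : mollifier d n₂ z.1 = 0
        · simp only [hz1, zero_mul]
          exact hasDerivAt_const t 0
        by_cases hz2 : mollifier m n₁ z.2 = 0
        · simp only [hz2, mul_zero, zero_mul]
          exact hasDerivAt_const t 0
        have h1 : ‖z.1‖ ≤ ε := ((mollifier_lt hz1).trans (hNe n₂ hn₂)).le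
        have h2 : ‖z.2‖ ≤ ε := ((mollifier_lt hz2).trans (hNe n₁ hn₁)).le
        have hqt : (p.1 - z.2, p.2 + t • e - z.1) ∈ W := hKW (hmemK z.2 z.1 t h2 h1 ht)
        have hcont : Continuous fun s : ℝ =>
            ((p.1 - z.2 : EuclideanSpace ℝ (Fin m)), p.2 + s • e - z.1) := by
          apply Continuous.prodMk continuous_const
          exact (continuous_const.add (continuous_id.smul continuous_const)).sub
            continuous_const
        have hev : ∀ᶠ s in 𝓝 t,
            ((p.1 - z.2 : EuclideanSpace ℝ (Fin m)), p.2 + s • e - z.1) ∈ W :=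
          hcont.continuousAt.preimage_mem_nhds (hW.mem_nhds hqt)
        have h0' : HasDerivAt (fun s : ℝ => g (p.1 - z.2, (p.2 + t • e - z.1) + s • e))
            (gx i (p.1 - z.2, p.2 + t • e - z.1)) 0 := hgx i _ hqt
        have hsub : HasDerivAt (fun s : ℝ => s - t) (1:ℝ) t := (hasDerivAt_id t).sub_const t
        have h0'' : HasDerivAt (fun s : ℝ => g (p.1 - z.2, (p.2 + t • e - z.1) + s • e))
            (gx i (p.1 - z.2, p.2 + t • e - z.1)) (t - t) := by
          rw [sub_self]; exact h0'
        have hcomp := HasDerivAt.comp (h := fun s : ℝ => s - t) t h0'' hsub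
        have hgder : HasDerivAt (fun s : ℝ => g (p.1 - z.2, p.2 + s • e - z.1))
            (gx i (p.1 - z.2, p.2 + t • e - z.1)) t := by
          have hfun : (fun s : ℝ => g (p.1 - z.2, (p.2 + t • e - z.1) + (s - t) • e))
              = fun s : ℝ => g (p.1 - z.2, p.2 + s • e - z.1) := by
            funext s
            have harg : (p.2 + t • e - z.1) + (s - t) • e = p.2 + s • e - z.1 := by
              rw [sub_smul]; abel
            rw [harg]
          rw [← hfun]
          simp only [mul_one] at hcomp
          exact hcomp
        have hval : G1 (p.1 - z.2, p.2 + t • e - z.1)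
            = gx i (p.1 - z.2, p.2 + t • e - z.1) := by
          rw [hG1]; exact Set.indicator_of_mem hqt _
        show HasDerivAt (fun s : ℝ => mollifier d n₂ z.1 * mollifier m n₁ z.2 *
            G0 (p.1 - z.2, p.2 + s • e - z.1))
          (mollifier d n₂ z.1 * mollifier m n₁ z.2 * G1 (p.1 - z.2, p.2 + t • e - z.1)) t
        rw [hval]
        have hmulder := hgder.const_mul (mollifier d n₂ z.1 * mollifier m n₁ z.2)
        apply hmulder.congr_of_eventuallyEq
        filter_upwards [hev] with s hs
        rw [hG0, Set.indicator_of_mem hs]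
    have hEv : (fun t : ℝ => mollification W g n₁ n₂ (p.1, p.2 + t • e)) =ᶠ[𝓝 (0:ℝ)]
        (fun t : ℝ => ∫ z : EuclideanSpace ℝ (Fin d) × EuclideanSpace ℝ (Fin m),
            mollifier d n₂ z.1 * mollifier m n₁ z.2 * G0 (p.1 - z.2, p.2 + t • e - z.1)
            ∂(volume.prod volume)) := by
      filter_upwards [Metric.ball_mem_nhds (0:ℝ) εpos] with t ht
      have ht' : |t| ≤ ε := by
        have := mem_ball_zero_iff.1 ht
        rw [Real.norm_eq_abs] at this; exact this.le
      exact hmolle t ht'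
    rw [hEv.deriv_eq, hder.deriv, ← hIter G1 hG1m C hCK n₁ n₂ hn₁ hn₂ 0 habs0]
    simp only [zero_smul, add_zero]
  -- continuity of the indicator of the derivative on W
  have hG1cont : ∀ q ∈ W, ContinuousAt G1 q := by
    intro q hq
    have hevq : gx i =ᶠ[𝓝 q] G1 := by
      filter_upwards [hW.mem_nhds hq] with r hr
      rw [hG1, Set.indicator_of_mem hr]
    exact (((hgxc i) q hq).continuousAt (hW.mem_nhds hq)).congr hevq
  -- the inner limits
  set L : ℕ → ℝ := fun n₂ => ∫ y, mollifier d n₂ y * G1 (p.1, p.2 - y) with hLdef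
  have stepB : ∀ n₂ : ℕ, N ≤ n₂ →
      Tendsto (fun n₁ : ℕ => ∫ y, mollifier d n₂ y *
          ∫ u, mollifier m n₁ u * G1 (p.1 - u, p.2 - y)) atTop (𝓝 (L n₂)) := by
    intro n₂ hn₂
    apply tendsto_integral_filter_of_dominated_convergence
      (bound := fun y => mollifier d n₂ y * C)
    · apply Eventually.of_forall
      intro n₁
      apply AEStronglyMeasurable.mul (mollifier_measurable d n₂).aestronglyMeasurable
      apply StronglyMeasurable.aestronglyMeasurable
      apply MeasureTheory.StronglyMeasurable.integral_prod_right
        (f := fun (y : EuclideanSpace ℝ (Fin d)) (u : EuclideanSpace ℝ (Fin m)) =>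
          mollifier m n₁ u * G1 (p.1 - u, p.2 - y))
      apply Measurable.stronglyMeasurable
      apply Measurable.mul ((mollifier_measurable m n₁).comp measurable_snd)
      exact hG1m.comp (((continuous_const.sub continuous_snd).prodMk
        (continuous_const.sub continuous_fst)).measurable)
    · filter_upwards [eventually_ge_atTop N] with n₁ hn₁
      apply ae_of_all
      intro y
      by_cases hy : mollifier d n₂ y = 0
      · simp [hy]
      have hyε : ‖y‖ ≤ ε := ((mollifier_lt hy).trans (hNe n₂ hn₂)).le
      have hbpt : ∀ u, ‖mollifier m n₁ u * G1 (p.1 - u, p.2 - y)‖ ≤ mollifier m n₁ u * C := by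
        intro u
        by_cases hu : mollifier m n₁ u = 0
        · simp [hu]
        have huε : ‖u‖ ≤ ε := ((mollifier_lt hu).trans (hNe n₁ hn₁)).le
        have hq : (p.1 - u, p.2 - y) ∈ K := by
          have := hmemK u y 0 huε hyε habs0
          simpa using this
        rw [norm_mul, Real.norm_of_nonneg (mollifier_nonneg _ _ _)]
        exact mul_le_mul_of_nonneg_left (hCK _ hq) (mollifier_nonneg _ _ _)
      have hinner : ‖∫ u, mollifier m n₁ u * G1 (p.1 - u, p.2 - y)‖ ≤ C := by
        have hle := norm_integral_le_of_norm_le ((mollifier_integrable m n₁).mul_const C)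
          (ae_of_all _ hbpt)
        have heq : ∫ u, mollifier m n₁ u * C = C := by
          rw [integral_mul_const, mollifier_integral m (le_trans hNpos hn₁), one_mul]
        rw [heq] at hle
        exact hle
      rw [norm_mul, Real.norm_of_nonneg (mollifier_nonneg _ _ _)]
      exact mul_le_mul_of_nonneg_left hinner (mollifier_nonneg _ _ _)
    · exact (mollifier_integrable d n₂).mul_const C
    · apply ae_of_all
      intro y
      by_cases hy : mollifier d n₂ y = 0
      · simp only [hy, zero_mul]
        exact tendsto_const_nhds
      have hyε : ‖y‖ ≤ ε := ((mollifier_lt hy).trans (hNe n₂ hn₂)).le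
      have hqW : (p.1, p.2 - y) ∈ W := by
        apply hKW
        have := hmemK 0 y 0 (by simp [εpos.le]) hyε habs0
        simpa using this
      apply Tendsto.const_mul
      have hfm : AEStronglyMeasurable (fun a : EuclideanSpace ℝ (Fin m) => G1 (a, p.2 - y))
          volume :=
        (hG1m.comp ((continuous_id.prodMk continuous_const).measurable)).aestronglyMeasurable
      have hfc : ContinuousAt (fun a : EuclideanSpace ℝ (Fin m) => G1 (a, p.2 - y)) p.1 :=
        Filter.Tendsto.comp (hG1cont _ hqW)
          ((continuous_id.prodMk continuous_const).tendsto p.1)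
      exact mollifier_conv_tendsto hfm hfc
  -- Step C: the outer limit
  have stepC : Tendsto L atTop (𝓝 (gx i p)) := by
    have hfm : AEStronglyMeasurable (fun x : EuclideanSpace ℝ (Fin d) => G1 (p.1, x))
        volume :=
      (hG1m.comp ((continuous_const.prodMk continuous_id).measurable)).aestronglyMeasurable
    have hfc : ContinuousAt (fun x : EuclideanSpace ℝ (Fin d) => G1 (p.1, x)) p.2 := by
      have hpW : ((p.1 : EuclideanSpace ℝ (Fin m)), p.2) ∈ W := hp
      exact Filter.Tendsto.comp (hG1cont _ hpW)
        ((continuous_const.prodMk continuous_id).tendsto p.2)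
    have hval : G1 (p.1, p.2) = gx i p := by
      rw [hG1]
      have : ((p.1 : EuclideanSpace ℝ (Fin m)), p.2) = p := rfl
      rw [this, Set.indicator_of_mem hp]
    have := mollifier_conv_tendsto hfm hfc
    rw [hval] at this
    exact this
  refine ⟨N, L, fun n₂ hn₂ => ?_, stepC⟩
  apply Filter.Tendsto.congr' _ (stepB n₂ hn₂)
  filter_upwards [eventually_ge_atTop N] with n₁ hn₁
  exact (stepA n₁ n₂ hn₁ hn₂).symm
end

section
/- Let (Ω, F, (F_t)_{t≥0}, P) be a filtered probability space, m, d ≥ 1, and let f : ℝ^m × ℝ^d → ℝ be continuous such that f(λ, ·) : ℝ^d → ℝ is concave for every λ ∈ ℝ^m and such that f is L-Lipschitz with constant L ≥ 0 with respect to the metric ((λ, x), (λ', x')) ↦ Σ_{v=1}^{m}|λ_v − λ'_v| + Σ_{i=1}^{d}|x_i − x'_i|. Let Λ be an adapted ℝ^m-valued process with continuous paths of finite variation, M an ℝ^d-valued martingale with respect to (F_t) with continuous paths, V an adapted ℝ^d-valued process with continuous paths of finite variation, with M(0) = V(0) = 0, and suppose there is a constant κ ≥ 0 such that, almost surely, sup_{t≥0}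 ‖Λ(t)‖ ≤ κ, sup_{t≥0} ‖M(t)‖ ≤ κ, and Σ_{v=1}^{m} TV(Λ_v; [0, ∞)) + Σ_{i=1}^{d} TV(V_i; [0, ∞)) ≤ κ, where TV denotes total variation. Fix μ(0) ∈ ℝ^d and set μ(t) = μ(0) + M(t) + V(t). Then the process Z(t) = −f(Λ(t), μ(t)) + L ( Σ_{v=1}^{m} TV(Λ_v; [0, t]) + Σ_{i=1}^{d} TV(V_i; [0, t]) ) is a submartingale with respect to (F_t) and P, i.e., Z is adapted, each Z(t) is integrable, and E[Z(t) | F_s] ≥ Z(s) almost surely for all 0 ≤ s ≤ t. (This is the assertion established in the proof of Theorem A.5 of the paper, from which the semimartingale property of f(Λ(·), μ(·)) follows.) -/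
open MeasureTheory Filter Topology Set
open scoped NNReal ENNReal

namespace Stmt8Aux

lemma chain_sum_le {E : Type*} [PseudoEMetricSpace E] (w : ℕ → E) {k : ℕ → ℕ}
    (hk : Monotone k) (n K : ℕ) (hK : k n ≤ K) :
    ∑ i ∈ Finset.range n, edist (w (k (i+1))) (w (k i))
      ≤ ∑ j ∈ Finset.range K, edist (w (j+1)) (w j) := by
  have h1 : ∀ nn : ℕ, ∑ i ∈ Finset.range nn, edist (w (k (i+1))) (w (k i))
      ≤ ∑ j ∈ Finset.Ico (k 0) (k nn), edist (w (j+1)) (w j) := by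
    intro nn
    induction nn with
    | zero => simp
    | succ nn ih =>
      rw [Finset.sum_range_succ,
        ← Finset.sum_Ico_consecutive _ (hk (Nat.zero_le nn)) (hk (Nat.le_succ nn))]
      refine add_le_add ih ?_
      have h2 := edist_le_Ico_sum_edist w (hk (Nat.le_succ nn))
      calc edist (w (k (nn+1))) (w (k nn)) = edist (w (k nn)) (w (k (nn+1))) := edist_comm _ _
        _ ≤ ∑ i ∈ Finset.Ico (k nn) (k (nn+1)), edist (w i) (w (i+1)) := h2
        _ = ∑ i ∈ Finset.Ico (k nn) (k (nn+1)), edist (w (i+1)) (w i) := by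
            exact Finset.sum_congr rfl fun i _ => edist_comm _ _
  refine (h1 n).trans (Finset.sum_le_sum_of_subset ?_)
  intro j hj
  simp only [Finset.mem_Ico, Finset.mem_range] at *
  exact lt_of_lt_of_le hj.2 hK

/-- The `N`-th dyadic sum approximating the variation of `v` on `[0,t]`. -/
noncomputable def dySum (v : ℝ≥0 → ℝ) (t : ℝ≥0) (N : ℕ) : ℝ≥0∞ :=
  ∑ j ∈ Finset.range (2^N),
    edist (v (((j+1 : ℕ) : ℝ≥0) * t / 2^N)) (v (((j : ℕ) : ℝ≥0) * t / 2^N))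

lemma dy_le (t : ℝ≥0) (N : ℕ) {j : ℕ} (hj : j ≤ 2^N) : ((j : ℝ≥0) * t / 2^N) ≤ t := by
  have h2 : (0:ℝ≥0) < 2^N := by positivity
  rw [div_le_iff₀ h2]
  calc (j : ℝ≥0) * t ≤ ((2^N : ℕ) : ℝ≥0) * t :=
        mul_le_mul_left (by exact_mod_cast hj) t
    _ = t * 2^N := by push_cast; ring

lemma evar_eq_iSup_dySum (v : ℝ≥0 → ℝ) (hv : Continuous v) (t : ℝ≥0) :
    eVariationOn v (Icc 0 t) = ⨆ N, dySum v t N := by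
  refine le_antisymm ?_ (iSup_le fun N => ?_)
  · -- hard direction
    rcases eq_or_ne t 0 with rfl | ht
    · have : (Icc (0:ℝ≥0) 0).Subsingleton := by
        intro a ha b hb
        simp only [mem_Icc, le_zero_iff] at ha hb
        rw [ha.2, hb.2]
      simpa using (eVariationOn.subsingleton v this).le
    rw [eVariationOn]
    refine iSup_le ?_
    rintro ⟨n, p, hp, ps⟩
    refine ENNReal.le_of_forall_pos_le_add fun ε hε _ => ?_
    set ε₀ : ℝ := (ε : ℝ) / (2 * n + 2) with hε₀def
    have hn2 : (0:ℝ) < 2 * n + 2 := by positivity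
    have hε₀ : 0 < ε₀ := by positivity
    have hUC : UniformContinuousOn v (Icc 0 t) :=
      isCompact_Icc.uniformContinuousOn_of_continuous hv.continuousOn
    rw [Metric.uniformContinuousOn_iff] at hUC
    obtain ⟨δ, hδ, hδ'⟩ := hUC ε₀ hε₀
    obtain ⟨N, hN⟩ := exists_nat_gt ((t : ℝ) / δ)
    have hN2 : (t : ℝ) / 2^N < δ := by
      have h1 : (t : ℝ) / δ < 2^N := hN.trans_le (by exact_mod_cast (Nat.lt_two_pow_self (n := N)).le)
      have h2 : (0:ℝ) < 2^N := by positivity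
      rw [div_lt_iff₀ h2]
      rw [div_lt_iff₀ hδ] at h1
      linarith [h1]
    have h2N : ((2:ℝ≥0)^N) ≠ 0 := by positivity
    set k : ℕ → ℕ := fun i => ⌊(p i) * 2^N / t⌋₊ with hk
    have hkmono : Monotone k := by
      intro i j hij
      apply Nat.floor_mono
      gcongr
      exact hp hij
    have hkK : ∀ i, k i ≤ 2^N := by
      intro i
      have h1 : (p i) * 2^N / t ≤ ((2^N : ℕ) : ℝ≥0) := by
        rw [div_le_iff₀ (pos_iff_ne_zero.mpr ht)]
        push_cast
        have := (ps i).2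
        calc p i * 2^N ≤ t * 2^N := by gcongr
          _ = (2:ℝ≥0)^N * t := mul_comm _ _
      exact (Nat.floor_mono h1).trans_eq (Nat.floor_natCast _)
    set w : ℕ → ℝ≥0 := fun j => ((j : ℕ) : ℝ≥0) * t / 2^N with hw
    have hd_le : ∀ i, w (k i) ≤ p i := by
      intro i
      have h1 : ((k i : ℕ) : ℝ≥0) ≤ p i * 2^N / t := Nat.floor_le zero_le
      calc w (k i) ≤ (p i * 2^N / t) * t / 2^N := by
            show ((k i : ℕ) : ℝ≥0) * t / 2^N ≤ _
            gcongr
        _ = p i := by rw [div_mul_cancel₀ _ ht, mul_div_cancel_right₀ _ h2N]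
    have hd_ge : ∀ i, (p i : ℝ) ≤ (w (k i) : ℝ) + (t : ℝ)/2^N := by
      intro i
      have h1 : p i * 2^N / t < (k i : ℝ≥0) + 1 := Nat.lt_floor_add_one _
      rw [div_lt_iff₀ (pos_iff_ne_zero.mpr ht)] at h1
      have h2 : p i * 2^N < ((k i : ℝ≥0) + 1) * t := h1
      have h3 : p i ≤ ((k i : ℝ≥0) + 1) * t / 2^N := by
        rw [le_div_iff₀ (pos_iff_ne_zero.mpr h2N)]
        exact h2.le
      have h4 : (((k i : ℝ≥0) + 1) * t / 2^N : ℝ≥0) = w (k i) + t / 2^N := by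
        unfold w
        rw [add_mul, one_mul, add_div]
      rw [h4] at h3
      exact_mod_cast h3
    have hwmem : ∀ i, w (k i) ∈ Icc 0 t := fun i => ⟨zero_le, (hd_le i).trans (ps i).2⟩
    have hdist : ∀ i, dist (p i) (w (k i)) < δ := by
      intro i
      rw [NNReal.dist_eq]
      have h1 : (w (k i) : ℝ) ≤ (p i : ℝ) := by exact_mod_cast hd_le i
      rw [abs_of_nonneg (by linarith)]
      have := hd_ge i
      linarith [hN2]
    have hterm : ∀ i, edist (v (p i)) (v (w (k i))) ≤ ENNReal.ofReal ε₀ := by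
      intro i
      rw [edist_dist]
      exact ENNReal.ofReal_le_ofReal (hδ' _ (ps i) _ (hwmem i) (hdist i)).le
    calc ∑ i ∈ Finset.range n, edist (v (p (i+1))) (v (p i))
        ≤ ∑ i ∈ Finset.range n,
            (ENNReal.ofReal ε₀ + edist (v (w (k (i+1)))) (v (w (k i))) + ENNReal.ofReal ε₀) := by
          refine Finset.sum_le_sum fun i _ => ?_
          calc edist (v (p (i+1))) (v (p i))
              ≤ edist (v (p (i+1))) (v (w (k (i+1)))) + edist (v (w (k (i+1)))) (v (w (k i)))
                + edist (v (w (k i))) (v (p i)) := edist_triangle4 _ _ _ _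
            _ ≤ ENNReal.ofReal ε₀ + edist (v (w (k (i+1)))) (v (w (k i))) + ENNReal.ofReal ε₀ := by
                gcongr
                · exact hterm (i+1)
                · rw [edist_comm]; exact hterm i
      _ = (∑ i ∈ Finset.range n, edist (v (w (k (i+1)))) (v (w (k i))))
            + n * (2 * ENNReal.ofReal ε₀) := by
          rw [Finset.sum_add_distrib, Finset.sum_add_distrib, Finset.sum_const,
            Finset.card_range]
          simp only [nsmul_eq_mul]
          ring
      _ ≤ dySum v t N + n * (2 * ENNReal.ofReal ε₀) := by
          gcongr
          exact chain_sum_le (fun j => v (w j)) hkmono n (2^N) (hkK n)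
      _ ≤ (⨆ N', dySum v t N') + ε := by
          gcongr
          · exact le_iSup _ N
          · have h1 : (n : ℝ≥0∞) * (2 * ENNReal.ofReal ε₀) = ENNReal.ofReal (n * (2 * ε₀)) := by
              rw [ENNReal.ofReal_mul (by positivity), ENNReal.ofReal_mul (by norm_num),
                ENNReal.ofReal_natCast, ENNReal.ofReal_ofNat]
            rw [h1, ← ENNReal.ofReal_coe_nnreal]
            apply ENNReal.ofReal_le_ofReal
            have hεnn : (0:ℝ) ≤ ε := ε.coe_nonneg
            have heq : (n:ℝ) * (2 * ((ε:ℝ) / (2 * n + 2))) = (ε:ℝ) * ((2*n)/(2*n+2)) := by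
              field_simp
            have hx : (2*(n:ℝ))/(2*n+2) ≤ 1 :=
              div_le_one_of_le₀ (by linarith) (by positivity)
            calc (n:ℝ) * (2 * ε₀) = (ε:ℝ) * ((2*n)/(2*n+2)) := heq
              _ ≤ (ε:ℝ) * 1 := by
                  apply mul_le_mul_of_nonneg_left hx hεnn
              _ = (ε:ℝ) := mul_one _
  · -- easy direction
    have := eVariationOn.sum_le (f := v) (n := 2^N)
      (u := fun j => ((min j (2^N) : ℕ) : ℝ≥0) * t / 2^N)
      (fun i j hij => by
        have hmin : ((min i (2^N) : ℕ) : ℝ≥0) ≤ ((min j (2^N) : ℕ) : ℝ≥0) := by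
          exact_mod_cast min_le_min hij le_rfl
        show ((min i (2^N) : ℕ) : ℝ≥0) * t / 2^N ≤ ((min j (2^N) : ℕ) : ℝ≥0) * t / 2^N
        gcongr)
      (fun i => mem_Icc.mpr ⟨zero_le, dy_le t N (min_le_right _ _)⟩)
    refine le_trans ?_ this
    apply le_of_eq
    refine Finset.sum_congr rfl fun j hj => ?_
    rw [Finset.mem_range] at hj
    have h1 : min (j+1) (2^N) = j + 1 := min_eq_left hj
    have h2 : min j (2^N) = j := min_eq_left hj.le
    simp only [h1, h2]


/-- measurability in `ω` of the variation of a continuous path on `[0,t]`. -/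
lemma measurable_evar {Ω : Type*} {mΩ : MeasurableSpace Ω} (g : ℝ≥0 → Ω → ℝ) (t : ℝ≥0)
    (hc : ∀ ω, Continuous fun s => g s ω) (hmeas : ∀ s : ℝ≥0, s ≤ t → Measurable (g s)) :
    Measurable fun ω => eVariationOn (fun s => g s ω) (Icc 0 t) := by
  have h : (fun ω => eVariationOn (fun s => g s ω) (Icc 0 t))
      = fun ω => ⨆ N, dySum (fun s => g s ω) t N := by
    funext ω
    exact evar_eq_iSup_dySum _ (hc ω) t
  rw [h]
  refine Measurable.iSup fun N => ?_
  unfold dySum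
  refine Finset.measurable_sum _ fun j hj => ?_
  rw [Finset.mem_range] at hj
  exact Measurable.edist (hmeas _ (dy_le t N hj)) (hmeas _ (dy_le t N hj.le))

end Stmt8Aux
namespace Stmt8AuxB

/-- Rational affine majorants of a continuous concave function on a ball. -/
lemma exists_rat_affine_majorant {d : ℕ} (g : (Fin d → ℝ) → ℝ) (hg : Continuous g)
    (hconc : ConcaveOn ℝ univ g) {R : ℝ} (hR : 0 < R) (x : Fin d → ℝ) (hx : ‖x‖ < R)
    {ε : ℝ} (hε : 0 < ε) :
    ∃ (a : Fin d → ℚ) (b : ℚ), (∀ y : Fin d → ℝ, ‖y‖ < R → g y ≤ ∑ i, (a i : ℝ) * y i + b) ∧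
      (∑ i, (a i : ℝ) * x i + b ≤ g x + ε) := by
  classical
  set H : Set ((Fin d → ℝ) × ℝ) := {p | p.2 ≤ g p.1} with hH
  have hHconv : Convex ℝ H := by
    have := hconc.convex_hypograph
    simpa [hH] using this
  have hHclosed : IsClosed H := isClosed_le continuous_snd (hg.comp continuous_fst)
  have hxH : (x, g x + ε/2) ∉ H := by
    simp only [hH, mem_setOf_eq]
    push_neg
    linarith
  obtain ⟨φ, u, h1, h2⟩ := geometric_hahn_banach_closed_point hHconv hHclosed hxH
  have hmemH : ∀ (y : Fin d → ℝ) (r : ℝ), r ≤ g y → (y, r) ∈ H := fun y r hr => hr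
  set c₀ : ℝ := φ (0, 1) with hc₀
  set ψ : (Fin d → ℝ) → ℝ := fun y => φ (y, 0) with hψ
  have hφ_split : ∀ (y : Fin d → ℝ) (r : ℝ), φ (y, r) = ψ y + r * c₀ := by
    intro y r
    have h3 : (y, r) = (y, (0:ℝ)) + r • ((0 : Fin d → ℝ), (1:ℝ)) := by
      simp [Prod.ext_iff]
    rw [h3, map_add, φ.map_smul]
    simp [hψ, hc₀, smul_eq_mul]
  have hc₀pos : 0 < c₀ := by
    rcases lt_trichotomy c₀ 0 with hneg | hzero | hpos
    · exfalso
      set v : ℝ := min (g x) ((u - ψ x) / c₀) with hv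
      have hvH : (x, v) ∈ H := hmemH _ _ (min_le_left _ _)
      have h4 := h1 _ hvH
      rw [hφ_split] at h4
      have hvle : v ≤ (u - ψ x) / c₀ := min_le_right _ _
      rw [le_div_iff_of_neg hneg] at hvle
      linarith
    · exfalso
      have e1 := h1 _ (hmemH x (g x) le_rfl)
      rw [hφ_split] at e1 h2
      rw [hzero] at e1 h2
      simp only [mul_zero, add_zero] at e1 h2
      linarith
    · exact hpos
  have hψlin : ∀ y : Fin d → ℝ, ψ y = ∑ i, y i * ψ (Pi.single i 1) := by
    intro y
    have hy : y = ∑ i, y i • (Pi.single i (1:ℝ) : Fin d → ℝ) := by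
      funext j
      simp [Finset.sum_apply, Pi.single_apply, mul_ite, Finset.sum_ite_eq, Finset.sum_ite_eq']
    have hy2 : ((y, (0:ℝ)) : (Fin d → ℝ) × ℝ)
        = ∑ i, y i • ((Pi.single i (1:ℝ) : Fin d → ℝ), (0:ℝ)) := by
      rw [Prod.ext_iff]
      constructor
      · rw [Prod.fst_sum]
        simpa using hy
      · rw [Prod.snd_sum]
        simp
    calc ψ y = φ (y, 0) := rfl
      _ = ∑ i, y i * ψ (Pi.single i 1) := by
          rw [hy2, map_sum]
          refine Finset.sum_congr rfl fun i _ => ?_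
          rw [φ.map_smul]
          simp [hψ, smul_eq_mul]
  set α : Fin d → ℝ := fun i => -ψ (Pi.single i 1) / c₀ with hα
  set β : ℝ := u / c₀ with hβ
  have key : ∀ y : Fin d → ℝ, (u - ψ y) / c₀ = ∑ i, α i * y i + β := by
    intro y
    have h5 : ∑ i, α i * y i = -(∑ i, y i * ψ (Pi.single i 1) / c₀) := by
      rw [← Finset.sum_neg_distrib]
      refine Finset.sum_congr rfl fun i _ => ?_
      show -ψ (Pi.single i 1) / c₀ * y i = -(y i * ψ (Pi.single i 1) / c₀)
      ring
    rw [h5, hψlin y, sub_div, Finset.sum_div, hβ]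
    ring
  have hmaj : ∀ y : Fin d → ℝ, g y ≤ ∑ i, α i * y i + β := by
    intro y
    have h4 := h1 _ (hmemH y (g y) le_rfl)
    rw [hφ_split] at h4
    rw [← key y]
    rw [le_div_iff₀ hc₀pos]
    linarith
  have hval : ∑ i, α i * x i + β < g x + ε/2 := by
    rw [hφ_split] at h2
    rw [← key x, div_lt_iff₀ hc₀pos]
    linarith
  -- rationalize
  set δ' : ℝ := ε / (8 * (d * R + 1)) with hδ'
  have hdR : (0:ℝ) < d * R + 1 := by positivity
  have hδ'pos : 0 < δ' := by positivity
  have haux : ∀ i : Fin d, ∃ q : ℚ, |α i - (q:ℝ)| < δ' := fun i => exists_rat_near (α i) hδ'pos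
  choose a ha using haux
  obtain ⟨b, hb1, hb2⟩ := exists_rat_btwn (by linarith : β + ε/8 < β + ε/4)
  have hfin : (d:ℝ) * (δ' * R) ≤ ε/8 := by
    have h9 : (d:ℝ) * (δ' * R) = ε * ((d*R) / (8*(d*R+1))) := by
      rw [hδ']
      field_simp
    have h10 : ((d:ℝ)*R) / (8*((d:ℝ)*R+1)) ≤ 1/8 := by
      rw [div_le_div_iff₀ (by positivity) (by norm_num)]
      linarith
    calc (d:ℝ) * (δ' * R) = ε * ((d*R) / (8*(d*R+1))) := h9
      _ ≤ ε * (1/8) := mul_le_mul_of_nonneg_left h10 hε.le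
      _ = ε/8 := by ring
  have hsumbd : ∀ y : Fin d → ℝ, ‖y‖ < R →
      |∑ i, (α i - (a i : ℝ)) * y i| ≤ ε/8 := by
    intro y hy
    calc |∑ i, (α i - (a i : ℝ)) * y i| ≤ ∑ i, |(α i - (a i : ℝ)) * y i| :=
          Finset.abs_sum_le_sum_abs _ _
      _ ≤ ∑ _i : Fin d, δ' * R := by
          refine Finset.sum_le_sum fun i _ => ?_
          rw [abs_mul]
          have h5 : |y i| ≤ R := (norm_le_pi_norm y i).trans hy.le
          exact mul_le_mul (ha i).le h5 (abs_nonneg _) hδ'pos.le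
      _ = (d:ℝ) * (δ' * R) := by
          rw [Finset.sum_const, Finset.card_univ, Fintype.card_fin, nsmul_eq_mul]
      _ ≤ ε/8 := hfin
  have hsplit : ∀ y : Fin d → ℝ,
      ∑ i, α i * y i - ∑ i, (a i : ℝ) * y i = ∑ i, (α i - (a i : ℝ)) * y i := by
    intro y
    rw [← Finset.sum_sub_distrib]
    exact Finset.sum_congr rfl fun i _ => by ring
  refine ⟨a, b, fun y hy => ?_, ?_⟩
  · have h5 := hmaj y
    have h6 := abs_le.1 (hsumbd y hy)
    have h7 := hsplit y
    linarith [h6.1, h6.2]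
  · have h6 := abs_le.1 (hsumbd x hx)
    have h7 := hsplit x
    linarith [hval, h6.1, h6.2]

end Stmt8AuxB

/-- **Submartingale property from the proof of Theorem A.5**: let `f(λ, x)` be
continuous, concave in `x` for each fixed `λ`, and `L`-Lipschitz with respect to the
`ℓ¹` metric on `ℝ^m × ℝ^d`. Let `Λ` be adapted with continuous paths of finite
variation, `M` a continuous martingale, `V` adapted with continuous paths of finite
variation, `M(0) = V(0) = 0`, all uniformly controlled by a constant `κ` (almost
surely `‖Λ(t)‖ ≤ κ`, `‖M(t)‖ ≤ κ`, and the sum of the total variations of the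
components of `Λ` and of `V` on `[0, ∞)` is at most `κ`). With
`μ(t) = μ(0) + M(t) + V(t)`, the process
`Z(t) = −f(Λ(t), μ(t)) + L (∑_v TV(Λ_v; [0,t]) + ∑_i TV(V_i; [0,t]))`
is a submartingale. -/
theorem stmt8 {m d : ℕ} (hm : 1 ≤ m) (hd : 1 ≤ d)
    {Ω : Type*} {mΩ : MeasurableSpace Ω} (P : Measure Ω) [IsProbabilityMeasure P]
    (ℱ : Filtration ℝ≥0 mΩ)
    (f : (Fin m → ℝ) → (Fin d → ℝ) → ℝ)
    (hfc : Continuous fun q : (Fin m → ℝ) × (Fin d → ℝ) => f q.1 q.2)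
    (hconc : ∀ lam : Fin m → ℝ, ConcaveOn ℝ Set.univ (f lam))
    (L : ℝ) (hL : 0 ≤ L)
    (hLip : ∀ lam lam' : Fin m → ℝ, ∀ x x' : Fin d → ℝ,
      |f lam x - f lam' x'| ≤
        L * ((∑ v, |lam v - lam' v|) + ∑ i, |x i - x' i|))
    (Λ : ℝ≥0 → Ω → (Fin m → ℝ))
    (hΛadapted : Adapted ℱ Λ)
    (hΛcont : ∀ ω, Continuous fun t => Λ t ω)
    (hΛfv : ∀ ω v, BoundedVariationOn (fun t => Λ t ω v) Set.univ)
    (M : ℝ≥0 → Ω → (Fin d → ℝ))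
    (hM : Martingale M ℱ P)
    (hMcont : ∀ ω, Continuous fun t => M t ω)
    (V : ℝ≥0 → Ω → (Fin d → ℝ))
    (hVadapted : Adapted ℱ V)
    (hVcont : ∀ ω, Continuous fun t => V t ω)
    (hVfv : ∀ ω i, BoundedVariationOn (fun t => V t ω i) Set.univ)
    (hM0 : ∀ ω, M 0 ω = 0) (hV0 : ∀ ω, V 0 ω = 0)
    (κ : ℝ) (hκ : 0 ≤ κ)
    (hbd : ∀ᵐ ω ∂P,
      (∀ t, ‖Λ t ω‖ ≤ κ) ∧ (∀ t, ‖M t ω‖ ≤ κ) ∧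
        (∑ v, eVariationOn (fun t => Λ t ω v) Set.univ)
          + (∑ i, eVariationOn (fun t => V t ω i) Set.univ) ≤ ENNReal.ofReal κ)
    (μ₀ : Fin d → ℝ)
    (Z : ℝ≥0 → Ω → ℝ)
    (hZ : ∀ t ω,
      Z t ω = -f (Λ t ω) (μ₀ + M t ω + V t ω)
        + L * ((∑ v, (eVariationOn (fun s => Λ s ω v) (Icc 0 t)).toReal)
             + ∑ i, (eVariationOn (fun s => V s ω i) (Icc 0 t)).toReal)) :
    Submartingale Z ℱ P := by
  classical
  have hΛadapted : StronglyAdapted ℱ Λ := hΛadapted.stronglyAdapted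
  have hVadapted : StronglyAdapted ℱ V := hVadapted.stronglyAdapted
  have hMadp : StronglyAdapted ℱ M := hM.stronglyAdapted
  have hΛcontv : ∀ ω v, Continuous fun r : ℝ≥0 => Λ r ω v :=
    fun ω v => (continuous_apply v).comp (hΛcont ω)
  have hVconti : ∀ ω i, Continuous fun r : ℝ≥0 => V r ω i :=
    fun ω i => (continuous_apply i).comp (hVcont ω)
  -- the good event
  have hgood : ∀ᵐ ω ∂P, (∀ r, ‖Λ r ω‖ ≤ κ) ∧ (∀ r, ‖M r ω‖ ≤ κ) ∧
      (∀ v, eVariationOn (fun r => Λ r ω v) univ ≤ ENNReal.ofReal κ) ∧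
      (∀ i, eVariationOn (fun r => V r ω i) univ ≤ ENNReal.ofReal κ) := by
    filter_upwards [hbd] with ω h
    obtain ⟨h1, h2, h3⟩ := h
    refine ⟨h1, h2, fun v => ?_, fun i => ?_⟩
    · exact le_trans (le_trans (Finset.single_le_sum
        (f := fun v => eVariationOn (fun r => Λ r ω v) univ)
        (fun _ _ => zero_le) (Finset.mem_univ v)) le_self_add) h3
    · exact le_trans (le_trans (Finset.single_le_sum
        (f := fun i => eVariationOn (fun r => V r ω i) univ)
        (fun _ _ => zero_le) (Finset.mem_univ i)) le_add_self) h3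
  -- pointwise bounds
  have hfabs : ∀ (lam : Fin m → ℝ) (x : Fin d → ℝ),
      |f lam x| ≤ |f 0 0| + L * ((∑ v, |lam v|) + ∑ i, |x i|) := by
    intro lam x
    have h1 := hLip lam 0 x 0
    simp only [Pi.zero_apply, sub_zero] at h1
    have h2 : f lam x = f 0 0 + (f lam x - f 0 0) := by ring
    calc |f lam x| = |f 0 0 + (f lam x - f 0 0)| := by rw [← h2]
      _ ≤ |f 0 0| + |f lam x - f 0 0| := abs_add_le _ _
      _ ≤ |f 0 0| + L * ((∑ v, |lam v|) + ∑ i, |x i|) := by linarith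
  have hΛabs : ∀ ω, (∀ r, ‖Λ r ω‖ ≤ κ) → ∀ (r : ℝ≥0) v, |Λ r ω v| ≤ κ := by
    intro ω h r v
    have h1 := norm_le_pi_norm (Λ r ω) v
    rw [Real.norm_eq_abs] at h1
    exact h1.trans (h r)
  have hMabs : ∀ ω, (∀ r, ‖M r ω‖ ≤ κ) → ∀ (r : ℝ≥0) i, |M r ω i| ≤ κ := by
    intro ω h r i
    have h1 := norm_le_pi_norm (M r ω) i
    rw [Real.norm_eq_abs] at h1
    exact h1.trans (h r)
  have hVabs : ∀ ω, (∀ i, eVariationOn (fun r => V r ω i) univ ≤ ENNReal.ofReal κ) →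
      ∀ (r : ℝ≥0) i, |V r ω i| ≤ κ := by
    intro ω h r i
    have h0 : dist (V r ω i) (V 0 ω i) ≤ (eVariationOn (fun r => V r ω i) univ).toReal :=
      (hVfv ω i).dist_le (mem_univ r) (mem_univ 0)
    have h1 : V 0 ω i = 0 := by rw [hV0 ω]; rfl
    rw [h1, dist_zero_right, Real.norm_eq_abs] at h0
    exact h0.trans (ENNReal.toReal_le_of_le_ofReal hκ (h i))
  set Cf : ℝ := |f 0 0| + L * (m * κ + d * (‖μ₀‖ + 2*κ)) with hCf
  set CZ : ℝ := Cf + L * ((m + d) * κ) with hCZdef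
  have hμ₀abs : ∀ i, |μ₀ i| ≤ ‖μ₀‖ := by
    intro i
    have := norm_le_pi_norm μ₀ i
    rwa [Real.norm_eq_abs] at this
  have hfbd2 : ∀ ω, (∀ r, ‖Λ r ω‖ ≤ κ) → (∀ r, ‖M r ω‖ ≤ κ) →
      (∀ i, eVariationOn (fun r => V r ω i) univ ≤ ENNReal.ofReal κ) →
      ∀ r₁ r₂ r₃ : ℝ≥0, |f (Λ r₁ ω) (μ₀ + M r₂ ω + V r₃ ω)| ≤ Cf := by
    intro ω h1 h2 h3 r₁ r₂ r₃
    have s1 : (∑ v, |Λ r₁ ω v|) ≤ m * κ := by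
      calc (∑ v, |Λ r₁ ω v|) ≤ ∑ _v : Fin m, κ :=
            Finset.sum_le_sum fun v _ => hΛabs ω h1 r₁ v
        _ = m * κ := by rw [Finset.sum_const, Finset.card_univ, Fintype.card_fin, nsmul_eq_mul]
    have s2 : (∑ i, |(μ₀ + M r₂ ω + V r₃ ω) i|) ≤ d * (‖μ₀‖ + 2*κ) := by
      calc (∑ i, |(μ₀ + M r₂ ω + V r₃ ω) i|) ≤ ∑ _i : Fin d, (‖μ₀‖ + 2*κ) := by
            refine Finset.sum_le_sum fun i _ => ?_
            have e1 : (μ₀ + M r₂ ω + V r₃ ω) i = μ₀ i + M r₂ ω i + V r₃ ω i := rfl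
            rw [e1]
            have := hμ₀abs i
            have := hMabs ω h2 r₂ i
            have := hVabs ω h3 r₃ i
            calc |μ₀ i + M r₂ ω i + V r₃ ω i| ≤ |μ₀ i| + |M r₂ ω i| + |V r₃ ω i| :=
                  (abs_add_le _ _).trans (by gcongr; exact abs_add_le _ _)
              _ ≤ ‖μ₀‖ + 2*κ := by linarith
        _ = d * (‖μ₀‖ + 2*κ) := by
            rw [Finset.sum_const, Finset.card_univ, Fintype.card_fin, nsmul_eq_mul]
    calc |f (Λ r₁ ω) (μ₀ + M r₂ ω + V r₃ ω)|
        ≤ |f 0 0| + L * ((∑ v, |Λ r₁ ω v|) + ∑ i, |(μ₀ + M r₂ ω + V r₃ ω) i|) := hfabs _ _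
      _ ≤ Cf := by
          rw [hCf]
          have : (∑ v, |Λ r₁ ω v|) + ∑ i, |(μ₀ + M r₂ ω + V r₃ ω) i| ≤ m*κ + d*(‖μ₀‖+2*κ) :=
            add_le_add s1 s2
          nlinarith [this, hL]
  -- variation toReal bounds
  have hvarbd : ∀ (u : ℝ≥0 → ℝ), BoundedVariationOn u univ →
      eVariationOn u univ ≤ ENNReal.ofReal κ →
      ∀ r : ℝ≥0, (eVariationOn u (Icc 0 r)).toReal ≤ κ := by
    intro u _ hub r
    exact ENNReal.toReal_le_of_le_ofReal hκ ((eVariationOn.mono u (subset_univ _)).trans hub)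
  have hZbd : ∀ᵐ ω ∂P, ∀ r, |Z r ω| ≤ CZ := by
    filter_upwards [hgood] with ω hg
    obtain ⟨h1, h2, h3, h4⟩ := hg
    intro r
    rw [hZ r ω]
    set SΛ := ∑ v, (eVariationOn (fun s => Λ s ω v) (Icc 0 r)).toReal with hSΛ
    set SV := ∑ i, (eVariationOn (fun s => V s ω i) (Icc 0 r)).toReal with hSV
    have hSΛ0 : 0 ≤ SΛ := Finset.sum_nonneg fun _ _ => ENNReal.toReal_nonneg
    have hSV0 : 0 ≤ SV := Finset.sum_nonneg fun _ _ => ENNReal.toReal_nonneg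
    have hSΛbd : SΛ ≤ m * κ := by
      rw [hSΛ]
      calc (∑ v, (eVariationOn (fun s => Λ s ω v) (Icc 0 r)).toReal) ≤ ∑ _v : Fin m, κ :=
            Finset.sum_le_sum fun v _ => hvarbd _ (hΛfv ω v) (h3 v) r
        _ = m * κ := by rw [Finset.sum_const, Finset.card_univ, Fintype.card_fin, nsmul_eq_mul]
    have hSVbd : SV ≤ d * κ := by
      rw [hSV]
      calc (∑ i, (eVariationOn (fun s => V s ω i) (Icc 0 r)).toReal) ≤ ∑ _i : Fin d, κ :=
            Finset.sum_le_sum fun i _ => hvarbd _ (hVfv ω i) (h4 i) r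
        _ = d * κ := by rw [Finset.sum_const, Finset.card_univ, Fintype.card_fin, nsmul_eq_mul]
    have hf1 : |f (Λ r ω) (μ₀ + M r ω + V r ω)| ≤ Cf := hfbd2 ω h1 h2 h4 r r r
    have habs : |(-f (Λ r ω) (μ₀ + M r ω + V r ω)) + L * (SΛ + SV)|
        ≤ |f (Λ r ω) (μ₀ + M r ω + V r ω)| + L * (SΛ + SV) := by
      have h5 : 0 ≤ L * (SΛ + SV) := by positivity
      calc |(-f (Λ r ω) (μ₀ + M r ω + V r ω)) + L * (SΛ + SV)|
          ≤ |(-f (Λ r ω) (μ₀ + M r ω + V r ω))| + |L * (SΛ + SV)| := abs_add_le _ _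
        _ = |f (Λ r ω) (μ₀ + M r ω + V r ω)| + L * (SΛ + SV) := by
            rw [abs_neg, abs_of_nonneg h5]
    have h6 : L * (SΛ + SV) ≤ L * ((m + d) * κ) := by
      apply mul_le_mul_of_nonneg_left _ hL
      push_cast
      linarith
    calc |(-f (Λ r ω) (μ₀ + M r ω + V r ω)) + L * (SΛ + SV)|
        ≤ |f (Λ r ω) (μ₀ + M r ω + V r ω)| + L * (SΛ + SV) := habs
      _ ≤ Cf + L * ((m + d) * κ) := add_le_add hf1 h6
      _ = CZ := hCZdef.symm
  -- adaptedness
  have hvarΛmeas : ∀ (r : ℝ≥0) v,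
      Measurable[ℱ r] fun ω => eVariationOn (fun s => Λ s ω v) (Icc 0 r) := by
    intro r v
    refine Stmt8Aux.measurable_evar (mΩ := ℱ r) (fun s ω => Λ s ω v) r
      (fun ω => hΛcontv ω v) ?_
    intro s hs
    exact (measurable_pi_apply v).comp ((hΛadapted s).mono (ℱ.mono hs)).measurable
  have hvarVmeas : ∀ (r : ℝ≥0) i,
      Measurable[ℱ r] fun ω => eVariationOn (fun s => V s ω i) (Icc 0 r) := by
    intro r i
    refine Stmt8Aux.measurable_evar (mΩ := ℱ r) (fun s ω => V s ω i) r
      (fun ω => hVconti ω i) ?_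
    intro s hs
    exact (measurable_pi_apply i).comp ((hVadapted s).mono (ℱ.mono hs)).measurable
  have hZadp : StronglyAdapted ℱ Z := by
    intro r
    have hfun : Z r = fun ω =>
        -f (Λ r ω) (μ₀ + M r ω + V r ω)
          + L * ((∑ v, (eVariationOn (fun s => Λ s ω v) (Icc 0 r)).toReal)
               + ∑ i, (eVariationOn (fun s => V s ω i) (Icc 0 r)).toReal) := funext (hZ r)
    rw [hfun]
    refine StronglyMeasurable.add ?_ ?_
    · exact (hfc.comp_stronglyMeasurable ((hΛadapted r).prodMk
        ((stronglyMeasurable_const.add (hMadp r)).add (hVadapted r)))).neg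
    · refine stronglyMeasurable_const.mul (Measurable.stronglyMeasurable ?_)
      refine Measurable.add ?_ ?_
      · exact Finset.measurable_sum _ fun v _ => (hvarΛmeas r v).ennreal_toReal
      · exact Finset.measurable_sum _ fun i _ => (hvarVmeas r i).ennreal_toReal
  -- integrability
  have hZint : ∀ r, Integrable (Z r) P := by
    intro r
    refine Integrable.mono' (integrable_const CZ)
      ((hZadp r).mono (ℱ.le r)).aestronglyMeasurable ?_
    filter_upwards [hZbd] with ω h
    rw [Real.norm_eq_abs]
    exact h r
  refine submartingale_of_condExp_sub_nonneg hZadp hZint ?_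
  intro s t hst
  -- abbreviations
  set g : Ω → ℝ := fun ω => f (Λ s ω) (μ₀ + M t ω + V s ω) with hgdef
  set ψ : Ω → ℝ := fun ω => f (Λ s ω) (μ₀ + M s ω + V s ω) with hψdef
  -- pointwise inequality  Z t - Z s ≥ ψ - g
  have hptw : ∀ ω, ψ ω - g ω ≤ Z t ω - Z s ω := by
    intro ω
    have haddΛ : ∀ v, (eVariationOn (fun r => Λ r ω v) (Icc 0 t)).toReal
        = (eVariationOn (fun r => Λ r ω v) (Icc 0 s)).toReal
          + (eVariationOn (fun r => Λ r ω v) (Icc s t)).toReal := by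
      intro v
      have h1 := eVariationOn.Icc_add_Icc (fun r => Λ r ω v) (s := univ)
        zero_le hst (mem_univ s)
      simp only [univ_inter] at h1
      have h2 : eVariationOn (fun r => Λ r ω v) (Icc 0 s) ≠ ⊤ :=
        fun htop => hΛfv ω v (eq_top_iff.2 (htop ▸ eVariationOn.mono _ (subset_univ _)))
      have h3 : eVariationOn (fun r => Λ r ω v) (Icc s t) ≠ ⊤ :=
        fun htop => hΛfv ω v (eq_top_iff.2 (htop ▸ eVariationOn.mono _ (subset_univ _)))
      rw [← h1, ENNReal.toReal_add h2 h3]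
    have haddV : ∀ i, (eVariationOn (fun r => V r ω i) (Icc 0 t)).toReal
        = (eVariationOn (fun r => V r ω i) (Icc 0 s)).toReal
          + (eVariationOn (fun r => V r ω i) (Icc s t)).toReal := by
      intro i
      have h1 := eVariationOn.Icc_add_Icc (fun r => V r ω i) (s := univ)
        zero_le hst (mem_univ s)
      simp only [univ_inter] at h1
      have h2 : eVariationOn (fun r => V r ω i) (Icc 0 s) ≠ ⊤ :=
        fun htop => hVfv ω i (eq_top_iff.2 (htop ▸ eVariationOn.mono _ (subset_univ _)))
      have h3 : eVariationOn (fun r => V r ω i) (Icc s t) ≠ ⊤ :=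
        fun htop => hVfv ω i (eq_top_iff.2 (htop ▸ eVariationOn.mono _ (subset_univ _)))
      rw [← h1, ENNReal.toReal_add h2 h3]
    have hΛdiff : ∀ v, |Λ t ω v - Λ s ω v|
        ≤ (eVariationOn (fun r => Λ r ω v) (Icc s t)).toReal := by
      intro v
      have h1 := ((hΛfv ω v).mono (subset_univ (Icc s t))).dist_le (x := t) (y := s)
        (mem_Icc.mpr ⟨hst, le_rfl⟩) (mem_Icc.mpr ⟨le_rfl, hst⟩)
      rwa [Real.dist_eq] at h1
    have hVdiff : ∀ i, |V t ω i - V s ω i|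
        ≤ (eVariationOn (fun r => V r ω i) (Icc s t)).toReal := by
      intro i
      have h1 := ((hVfv ω i).mono (subset_univ (Icc s t))).dist_le (x := t) (y := s)
        (mem_Icc.mpr ⟨hst, le_rfl⟩) (mem_Icc.mpr ⟨le_rfl, hst⟩)
      rwa [Real.dist_eq] at h1
    have hlip2 : f (Λ t ω) (μ₀ + M t ω + V t ω) - g ω
        ≤ L * ((∑ v, |Λ t ω v - Λ s ω v|) + ∑ i, |V t ω i - V s ω i|) := by
      have h1 := hLip (Λ t ω) (Λ s ω) (μ₀ + M t ω + V t ω) (μ₀ + M t ω + V s ω)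
      have h3 : (∑ i, |(μ₀ + M t ω + V t ω) i - (μ₀ + M t ω + V s ω) i|)
          = ∑ i, |V t ω i - V s ω i| := by
        refine Finset.sum_congr rfl fun i _ => ?_
        have e1 : (μ₀ + M t ω + V t ω) i - (μ₀ + M t ω + V s ω) i = V t ω i - V s ω i := by
          show μ₀ i + M t ω i + V t ω i - (μ₀ i + M t ω i + V s ω i) = _
          ring
        rw [e1]
      rw [h3] at h1
      rw [hgdef]
      exact (le_abs_self _).trans h1
    have hsumΛ : ∑ v, |Λ t ω v - Λ s ω v|
        ≤ ∑ v, (eVariationOn (fun r => Λ r ω v) (Icc s t)).toReal :=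
      Finset.sum_le_sum fun v _ => hΛdiff v
    have hsumV : ∑ i, |V t ω i - V s ω i|
        ≤ ∑ i, (eVariationOn (fun r => V r ω i) (Icc s t)).toReal :=
      Finset.sum_le_sum fun i _ => hVdiff i
    have hA : ∑ v, (eVariationOn (fun r => Λ r ω v) (Icc 0 t)).toReal
        = (∑ v, (eVariationOn (fun r => Λ r ω v) (Icc 0 s)).toReal)
          + ∑ v, (eVariationOn (fun r => Λ r ω v) (Icc s t)).toReal := by
      rw [← Finset.sum_add_distrib]
      exact Finset.sum_congr rfl fun v _ => haddΛ v
    have hB : ∑ i, (eVariationOn (fun r => V r ω i) (Icc 0 t)).toReal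
        = (∑ i, (eVariationOn (fun r => V r ω i) (Icc 0 s)).toReal)
          + ∑ i, (eVariationOn (fun r => V r ω i) (Icc s t)).toReal := by
      rw [← Finset.sum_add_distrib]
      exact Finset.sum_congr rfl fun i _ => haddV i
    have hL2 : L * ((∑ v, |Λ t ω v - Λ s ω v|) + ∑ i, |V t ω i - V s ω i|)
        ≤ L * ((∑ v, (eVariationOn (fun r => Λ r ω v) (Icc s t)).toReal)
            + ∑ i, (eVariationOn (fun r => V r ω i) (Icc s t)).toReal) :=
      mul_le_mul_of_nonneg_left (add_le_add hsumΛ hsumV) hL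
    have hC : L * ((∑ v, (eVariationOn (fun r => Λ r ω v) (Icc 0 t)).toReal)
            + ∑ i, (eVariationOn (fun r => V r ω i) (Icc 0 t)).toReal)
        = L * ((∑ v, (eVariationOn (fun r => Λ r ω v) (Icc 0 s)).toReal)
            + ∑ i, (eVariationOn (fun r => V r ω i) (Icc 0 s)).toReal)
          + L * ((∑ v, (eVariationOn (fun r => Λ r ω v) (Icc s t)).toReal)
            + ∑ i, (eVariationOn (fun r => V r ω i) (Icc s t)).toReal) := by
      rw [hA, hB]; ring
    rw [hZ t ω, hZ s ω, hψdef]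
    linarith [hlip2, hL2, hC]
  -- measurability and integrability of g and ψ
  have hgSM : StronglyMeasurable g :=
    hfc.comp_stronglyMeasurable (((hΛadapted s).mono (ℱ.le s)).prodMk
      ((stronglyMeasurable_const.add ((hMadp t).mono (ℱ.le t))).add
        ((hVadapted s).mono (ℱ.le s))))
  have hψSM : StronglyMeasurable[ℱ s] ψ :=
    hfc.comp_stronglyMeasurable ((hΛadapted s).prodMk
      ((stronglyMeasurable_const.add (hMadp s)).add (hVadapted s)))
  have hgbd : ∀ᵐ ω ∂P, |g ω| ≤ Cf := by
    filter_upwards [hgood] with ω hgw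
    obtain ⟨h1, h2, h3, h4⟩ := hgw
    exact hfbd2 ω h1 h2 h4 s t s
  have hψbd : ∀ᵐ ω ∂P, |ψ ω| ≤ Cf := by
    filter_upwards [hgood] with ω hgw
    obtain ⟨h1, h2, h3, h4⟩ := hgw
    exact hfbd2 ω h1 h2 h4 s s s
  have hgint : Integrable g P := by
    refine Integrable.mono' (integrable_const Cf) hgSM.aestronglyMeasurable ?_
    filter_upwards [hgbd] with ω h
    rwa [Real.norm_eq_abs]
  have hψint : Integrable ψ P := by
    refine Integrable.mono' (integrable_const Cf)
      (hψSM.mono (ℱ.le s)).aestronglyMeasurable ?_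
    filter_upwards [hψbd] with ω h
    rwa [Real.norm_eq_abs]
  -- component integrability of M and V
  have hMiSM : ∀ (r : ℝ≥0) i, StronglyMeasurable fun ω => M r ω i := fun r i =>
    ((measurable_pi_apply i).comp ((hMadp r).mono (ℱ.le r)).measurable).stronglyMeasurable
  have hViSM : ∀ (r : ℝ≥0) i, StronglyMeasurable fun ω => V r ω i := fun r i =>
    ((measurable_pi_apply i).comp ((hVadapted r).mono (ℱ.le r)).measurable).stronglyMeasurable
  have hMint : ∀ (r : ℝ≥0) i, Integrable (fun ω => M r ω i) P := by
    intro r i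
    refine Integrable.mono (hM.integrable r) (hMiSM r i).aestronglyMeasurable ?_
    exact Eventually.of_forall fun ω => norm_le_pi_norm (M r ω) i
  have hVsint : ∀ i, Integrable (fun ω => V s ω i) P := by
    intro i
    refine Integrable.mono' (integrable_const κ) (hViSM s i).aestronglyMeasurable ?_
    filter_upwards [hgood] with ω hgw
    rw [Real.norm_eq_abs]
    exact hVabs ω hgw.2.2.2 s i
  -- componentwise martingale property
  have hMiSMs : ∀ i : Fin d, StronglyMeasurable[ℱ s] fun ω => M s ω i := fun i =>
    ((measurable_pi_apply i).comp (hMadp s).measurable).stronglyMeasurable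
  have hMcond : ∀ i, (fun ω => M s ω i) =ᵐ[P] P[(fun ω => M t ω i)|ℱ s] := by
    intro i
    refine ae_eq_condExp_of_forall_setIntegral_eq (ℱ.le s) (hMint t i)
      (fun A hA hAfin => (hMint s i).integrableOn) (fun A hA hAfin => ?_)
      (hMiSMs i).aestronglyMeasurable
    have hvec : ∫ ω in A, M s ω ∂P = ∫ ω in A, M t ω ∂P := hM.setIntegral_eq hst hA
    calc ∫ ω in A, M s ω i ∂P
        = ∫ ω in A, (ContinuousLinearMap.proj (R := ℝ) (φ := fun _ : Fin d => ℝ) i)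
            (M s ω) ∂P := rfl
      _ = (ContinuousLinearMap.proj (R := ℝ) (φ := fun _ : Fin d => ℝ) i)
            (∫ ω in A, M s ω ∂P) :=
          ContinuousLinearMap.integral_comp_comm _ (hM.integrable s).integrableOn
      _ = (ContinuousLinearMap.proj (R := ℝ) (φ := fun _ : Fin d => ℝ) i)
            (∫ ω in A, M t ω ∂P) := by rw [hvec]
      _ = ∫ ω in A, (ContinuousLinearMap.proj (R := ℝ) (φ := fun _ : Fin d => ℝ) i)
            (M t ω) ∂P :=
          (ContinuousLinearMap.integral_comp_comm _ (hM.integrable t).integrableOn).symm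
      _ = ∫ ω in A, M t ω i ∂P := rfl
  -- the radius
  set R : ℝ := ‖μ₀‖ + 2*κ + 1 with hRdef
  have hRpos : 0 < R := by positivity
  have hargbd : ∀ᵐ ω ∂P, ‖μ₀ + M t ω + V s ω‖ < R ∧ ‖μ₀ + M s ω + V s ω‖ < R := by
    filter_upwards [hgood] with ω hgw
    obtain ⟨h1, h2, h3, h4⟩ := hgw
    have key : ∀ r : ℝ≥0, ‖μ₀ + M r ω + V s ω‖ < R := by
      intro r
      rw [pi_norm_lt_iff hRpos]
      intro i
      rw [Real.norm_eq_abs]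
      have e1 : (μ₀ + M r ω + V s ω) i = μ₀ i + M r ω i + V s ω i := rfl
      rw [e1, hRdef]
      have b1 := hμ₀abs i
      have b2 := hMabs ω h2 r i
      have b3 := hVabs ω h4 s i
      calc |μ₀ i + M r ω i + V s ω i| ≤ |μ₀ i| + |M r ω i| + |V s ω i| := abs_add_three _ _ _
        _ < ‖μ₀‖ + 2*κ + 1 := by linarith
    exact ⟨key t, key s⟩
  -- the rational affine majorant events
  set Aq : (Fin d → ℚ) × ℚ → Set Ω := fun q =>
    {ω | ∀ y : Fin d → ℝ, ‖y‖ < R →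
      f (Λ s ω) y ≤ (∑ i, (q.1 i : ℝ) * y i) + (q.2 : ℝ)} with hAqdef
  have hAmeas : ∀ q, MeasurableSet[ℱ s] (Aq q) := by
    intro q
    have hset : Aq q = ⋂ (p : Fin d → ℚ),
        {ω | ‖(fun i => (p i : ℝ))‖ < R → f (Λ s ω) (fun i => (p i : ℝ))
          ≤ (∑ i, (q.1 i : ℝ) * (p i : ℝ)) + (q.2 : ℝ)} := by
      ext ω
      simp only [hAqdef, mem_iInter, mem_setOf_eq]
      constructor
      · intro h p hp
        exact h _ hp
      · intro h y hy
        have happ : ∀ n : ℕ, ∃ p : Fin d → ℚ,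
            ∀ i, |(p i : ℝ) - y i| < min (R - ‖y‖) (1/(n+1)) := by
          intro n
          have hpos : 0 < min (R - ‖y‖) (1/((n:ℝ)+1)) :=
            lt_min (by linarith) (by positivity)
          have hex := fun i => exists_rat_near (y i) hpos
          choose p hp using hex
          exact ⟨p, fun i => by rw [abs_sub_comm]; exact hp i⟩
        choose p hp using happ
        set yc : ℕ → (Fin d → ℝ) := fun n i => (p n i : ℝ) with hycdef
        have hnorm : ∀ n, ‖yc n‖ < R := by
          intro n
          have h1 : ‖yc n - y‖ < R - ‖y‖ := by
            rw [pi_norm_lt_iff (by linarith : (0:ℝ) < R - ‖y‖)]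
            intro i
            rw [Real.norm_eq_abs]
            exact lt_of_lt_of_le (hp n i) (min_le_left _ _)
          calc ‖yc n‖ = ‖(yc n - y) + y‖ := by rw [sub_add_cancel]
            _ ≤ ‖yc n - y‖ + ‖y‖ := norm_add_le _ _
            _ < R := by linarith
        have hle2 : ∀ n, f (Λ s ω) (yc n) ≤ (∑ i, (q.1 i:ℝ) * yc n i) + (q.2:ℝ) :=
          fun n => h (p n) (hnorm n)
        have hT : Tendsto yc atTop (𝓝 y) := by
          rw [tendsto_iff_norm_sub_tendsto_zero]
          refine squeeze_zero (fun n => norm_nonneg _) (fun n => ?_)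
            tendsto_one_div_add_atTop_nhds_zero_nat
          refine (pi_norm_le_iff_of_nonneg (by positivity)).2 fun i => ?_
          rw [Real.norm_eq_abs]
          exact ((hp n i).trans_le (min_le_right _ _)).le
        have hc1 : Tendsto (fun n => f (Λ s ω) (yc n)) atTop (𝓝 (f (Λ s ω) y)) :=
          ((hfc.comp (continuous_const.prodMk continuous_id)).tendsto y).comp hT
        have hc2 : Tendsto (fun n => (∑ i, (q.1 i:ℝ) * yc n i) + (q.2:ℝ)) atTop
            (𝓝 ((∑ i, (q.1 i:ℝ) * y i) + (q.2:ℝ))) := by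
          have hcont : Continuous fun x : Fin d → ℝ => (∑ i, (q.1 i:ℝ) * x i) + (q.2:ℝ) :=
            (continuous_finset_sum _ fun i _ =>
              continuous_const.mul (continuous_apply i)).add continuous_const
          exact (hcont.tendsto y).comp hT
        exact le_of_tendsto_of_tendsto' hc1 hc2 hle2
    rw [hset]
    refine MeasurableSet.iInter fun p => ?_
    by_cases hp : ‖(fun i => (p i : ℝ))‖ < R
    · have e1 : {ω | ‖(fun i => (p i : ℝ))‖ < R → f (Λ s ω) (fun i => (p i : ℝ))
          ≤ (∑ i, (q.1 i : ℝ) * (p i : ℝ)) + (q.2 : ℝ)}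
          = {ω | f (Λ s ω) (fun i => (p i : ℝ))
              ≤ (∑ i, (q.1 i : ℝ) * (p i : ℝ)) + (q.2 : ℝ)} := by
        ext ω; simp [hp]
      rw [e1]
      have hmeasf : Measurable[ℱ s] fun ω => f (Λ s ω) (fun i => (p i : ℝ)) :=
        ((hfc.comp (continuous_id.prodMk continuous_const)).comp_stronglyMeasurable
          (hΛadapted s)).measurable
      exact measurableSet_le hmeasf measurable_const
    · have e1 : {ω | ‖(fun i => (p i : ℝ))‖ < R → f (Λ s ω) (fun i => (p i : ℝ))
          ≤ (∑ i, (q.1 i : ℝ) * (p i : ℝ)) + (q.2 : ℝ)} = univ := by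
        ext ω; simp [hp]
      rw [e1]
      exact MeasurableSet.univ
  -- conditional expectation bound on each event
  have hA1 : ∀ q : (Fin d → ℚ) × ℚ, ∀ᵐ ω ∂P, ω ∈ Aq q →
      (P[g|ℱ s]) ω ≤ (∑ i, (q.1 i : ℝ) * (μ₀ i + M s ω i + V s ω i)) + (q.2 : ℝ) := by
    intro q
    set φM : Ω → ℝ := fun ω => ∑ i, (q.1 i:ℝ) * M t ω i with hφMdef
    set c : Ω → ℝ := fun ω => (∑ i, (q.1 i:ℝ) * (μ₀ i + V s ω i)) + (q.2:ℝ) with hcdef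
    set φq : Ω → ℝ := fun ω =>
      (∑ i, (q.1 i:ℝ) * (μ₀ i + M t ω i + V s ω i)) + (q.2:ℝ) with hφqdef
    have heq : φq = φM + c := by
      funext ω
      show (∑ i, (q.1 i:ℝ) * (μ₀ i + M t ω i + V s ω i)) + (q.2:ℝ) = φM ω + c ω
      rw [hφMdef, hcdef]
      have h5 : ∑ i, (q.1 i:ℝ) * (μ₀ i + M t ω i + V s ω i)
          = ∑ i, ((q.1 i:ℝ) * M t ω i + (q.1 i:ℝ) * (μ₀ i + V s ω i)) :=
        Finset.sum_congr rfl fun i _ => by ring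
      rw [h5, Finset.sum_add_distrib]
      ring
    have hφMint : Integrable φM P :=
      integrable_finset_sum _ fun i _ => (hMint t i).const_mul _
    have hcSM : StronglyMeasurable[ℱ s] c := by
      refine StronglyMeasurable.add ?_ stronglyMeasurable_const
      refine Measurable.stronglyMeasurable ?_
      refine Finset.measurable_sum _ fun i _ => ?_
      exact (measurable_const.add
        ((measurable_pi_apply i).comp (hVadapted s).measurable)).const_mul _
    have hcint : Integrable c P := by
      refine integrable_add_const_iff.mpr ?_
      refine integrable_finset_sum _ fun i _ => Integrable.const_mul ?_ _
      exact integrable_const_add_iff.mpr (hVsint i)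
    have hφint : Integrable φq P := by
      rw [heq]; exact hφMint.add hcint
    have hφMce : P[φM|ℱ s] =ᵐ[P] fun ω => ∑ i, (q.1 i:ℝ) * M s ω i := by
      have h6 : φM = ∑ i ∈ Finset.univ, fun ω => (q.1 i:ℝ) * M t ω i := by
        funext ω; rw [Finset.sum_apply]
      rw [h6]
      refine (condExp_finset_sum (fun i _ => (hMint t i).const_mul _) (ℱ s)).trans ?_
      have h8 : ∀ i : Fin d,
          P[fun ω => (q.1 i:ℝ) * M t ω i|ℱ s] =ᵐ[P] fun ω => (q.1 i:ℝ) * M s ω i := by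
        intro i
        have h9 : (fun ω => (q.1 i:ℝ) * M t ω i) = (q.1 i:ℝ) • fun ω => M t ω i := rfl
        rw [h9]
        refine (condExp_smul ((q.1 i : ℝ)) (fun ω => M t ω i) (ℱ s)).trans ?_
        filter_upwards [hMcond i] with ω hω
        show (q.1 i : ℝ) • (P[fun ω => M t ω i|ℱ s]) ω = (q.1 i:ℝ) * M s ω i
        rw [← hω]
        rfl
      have h10 : ∀ᵐ ω ∂P, ∀ i : Fin d,
          (P[fun ω' => (q.1 i:ℝ) * M t ω' i|ℱ s]) ω = (q.1 i:ℝ) * M s ω i :=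
        ae_all_iff.2 fun i => h8 i
      filter_upwards [h10] with ω hω
      rw [Finset.sum_apply]
      exact Finset.sum_congr rfl fun i _ => hω i
    have hφce : P[φq|ℱ s] =ᵐ[P]
        fun ω => (∑ i, (q.1 i:ℝ) * (μ₀ i + M s ω i + V s ω i)) + (q.2:ℝ) := by
      rw [heq]
      refine (condExp_add hφMint hcint (ℱ s)).trans ?_
      have h11 : P[c|ℱ s] = c := condExp_of_stronglyMeasurable (ℱ.le s) hcSM hcint
      rw [h11]
      filter_upwards [hφMce] with ω hω
      show (P[φM|ℱ s]) ω + c ω = _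
      rw [hω, hcdef]
      have h12 : ∑ i, (q.1 i:ℝ) * (μ₀ i + M s ω i + V s ω i)
          = ∑ i, ((q.1 i:ℝ) * M s ω i + (q.1 i:ℝ) * (μ₀ i + V s ω i)) :=
        Finset.sum_congr rfl fun i _ => by ring
      rw [h12, Finset.sum_add_distrib]
      ring
    have hApt : ∀ᵐ ω ∂P, ω ∈ Aq q → g ω ≤ φq ω := by
      filter_upwards [hargbd] with ω hω hmem
      exact hmem _ hω.1
    have hgind : (0 : Ω → ℝ) ≤ᵐ[P] P[(Aq q).indicator (φq - g)|ℱ s] := by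
      refine condExp_nonneg ?_
      filter_upwards [hApt] with ω hω
      refine Set.indicator_apply_nonneg fun hmem => ?_
      have h13 := hω hmem
      rw [Pi.sub_apply]
      linarith
    have hindeq := condExp_indicator (hφint.sub hgint) (hAmeas q)
    have hsubeq := condExp_sub (m := ℱ s) hφint hgint
    filter_upwards [hgind, hindeq, hsubeq, hφce] with ω h1 h2 h3 h4 hmem
    rw [Pi.zero_apply] at h1
    rw [h2, Set.indicator_of_mem hmem, h3, Pi.sub_apply, h4] at h1
    linarith
  -- conditional Jensen inequality
  have hJ : P[g|ℱ s] ≤ᵐ[P] ψ := by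
    have hall : ∀ᵐ ω ∂P, ∀ q : (Fin d → ℚ) × ℚ, ω ∈ Aq q →
        (P[g|ℱ s]) ω ≤ (∑ i, (q.1 i : ℝ) * (μ₀ i + M s ω i + V s ω i)) + (q.2:ℝ) :=
      ae_all_iff.2 hA1
    filter_upwards [hall, hargbd] with ω hω hbw
    rw [hψdef]
    refine le_of_forall_pos_le_add fun ε hε => ?_
    obtain ⟨a, b, hmaj, hval⟩ := Stmt8AuxB.exists_rat_affine_majorant (f (Λ s ω))
      (hfc.comp (continuous_const.prodMk continuous_id)) (hconc (Λ s ω)) hRpos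
      (μ₀ + M s ω + V s ω) hbw.2 hε
    have hmem : ω ∈ Aq (a, b) := fun y hy => hmaj y hy
    have h5 := hω (a, b) hmem
    exact h5.trans hval
  -- conclusion
  have hle : (ψ - g) ≤ᵐ[P] (Z t - Z s) :=
    Eventually.of_forall fun ω => by
      rw [Pi.sub_apply, Pi.sub_apply]
      exact hptw ω
  have hmono := condExp_mono (m := ℱ s) (hψint.sub hgint) ((hZint t).sub (hZint s)) hle
  have hsub1 := condExp_sub (m := ℱ s) hψint hgint
  have hψeq : P[ψ|ℱ s] = ψ := condExp_of_stronglyMeasurable (ℱ.le s) hψSM hψint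
  filter_upwards [hmono, hsub1, hJ] with ω h1 h2 h3
  rw [Pi.zero_apply]
  rw [h2, Pi.sub_apply, hψeq] at h1
  linarith [h1, h3]
end
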